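/- arXiv:1206.2185 — 7 statements merged into one kernel-verified Lean document; each statement's English description precedes it below -/
import Mathlib

section
/- Let ν₁, …, ν_N be distinct real numbers, let m ∈ {1,…,N}, and let z ∈ ℂ with z ≠ ν_j for all j. Then the limit as a → 0⁺ of Φ_ν^{ν_m,a}(z) = Γ(1 − a(ν_m − z))·∏_{j≠m} Γ(a(ν_j − ν_m))/Γ(a(ν_j − z)) equals Φ_ν^{ν_m}(z) = ∏_{j≠m} (ν_j − z)/(ν_j − ν_m). (Geometric lifting Φ^{·,a} reduces to the entire function Φ^{·} in the combinatorial limit a → 0.) -/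
open Filter Topology Finset

private lemma gamma_cont_one : ContinuousAt Complex.Gamma 1 := by
  refine (Complex.differentiableAt_Gamma 1 ?_).continuousAt
  intro n h
  have h1 : (1:ℂ).re = (-(n:ℂ)).re := by rw [h]
  simp at h1
  have h2 : (0:ℝ) ≤ (n:ℝ) := n.cast_nonneg
  linarith

private lemma gamma_shift_tendsto (w : ℂ) :
    Tendsto (fun a : ℝ => Complex.Gamma ((a : ℂ) * w + 1)) (𝓝[>] 0) (𝓝 1) := by
  have h1 : Tendsto (fun a : ℝ => (a : ℂ) * w + 1) (𝓝[>] 0) (𝓝 1) := by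
    have : Tendsto (fun a : ℝ => (a : ℂ) * w + 1) (𝓝 0) (𝓝 ((0:ℂ) * w + 1)) := by
      exact (((Complex.continuous_ofReal.tendsto 0).mul tendsto_const_nhds).add
        tendsto_const_nhds)
    simpa using this.mono_left nhdsWithin_le_nhds
  have := gamma_cont_one.tendsto.comp h1; rw [Complex.Gamma_one] at this; exact this

/-- Combinatorial limit `a → 0⁺` of the geometric lifting `Φ_ν^{ν_m,a}(z)`:
it converges to the entire function `Φ_ν^{ν_m}(z) = ∏_{j≠m} (ν_j − z)/(ν_j − ν_m)`. -/
theorem phi_lifting_combinatorial_limit (N : ℕ) (ν : Fin N → ℝ)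
    (hν : Function.Injective ν) (m : Fin N) (z : ℂ) (hz : ∀ j, z ≠ (ν j : ℂ)) :
    Tendsto
      (fun a : ℝ =>
        Complex.Gamma (1 - (a : ℂ) * ((ν m : ℂ) - z)) *
          ∏ j ∈ univ.erase m,
            Complex.Gamma ((a : ℂ) * ((ν j : ℂ) - (ν m : ℂ))) /
              Complex.Gamma ((a : ℂ) * ((ν j : ℂ) - z)))
      (𝓝[>] 0)
      (𝓝 (∏ j ∈ univ.erase m, ((ν j : ℂ) - z) / ((ν j : ℂ) - (ν m : ℂ)))) := by
  have hfirst : Tendsto (fun a : ℝ => Complex.Gamma (1 - (a : ℂ) * ((ν m : ℂ) - z)))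
      (𝓝[>] 0) (𝓝 1) := by
    have h1 : Tendsto (fun a : ℝ => 1 - (a : ℂ) * ((ν m : ℂ) - z)) (𝓝[>] 0) (𝓝 1) := by
      have : Tendsto (fun a : ℝ => 1 - (a : ℂ) * ((ν m : ℂ) - z)) (𝓝 0)
          (𝓝 (1 - (0:ℂ) * ((ν m : ℂ) - z))) :=
        tendsto_const_nhds.sub ((Complex.continuous_ofReal.tendsto 0).mul tendsto_const_nhds)
      simpa using this.mono_left nhdsWithin_le_nhds
    have := gamma_cont_one.tendsto.comp h1; rw [Complex.Gamma_one] at this; exact this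
  have hprod : Tendsto (fun a : ℝ => ∏ j ∈ univ.erase m,
        Complex.Gamma ((a : ℂ) * ((ν j : ℂ) - (ν m : ℂ))) /
          Complex.Gamma ((a : ℂ) * ((ν j : ℂ) - z)))
      (𝓝[>] 0) (𝓝 (∏ j ∈ univ.erase m, ((ν j : ℂ) - z) / ((ν j : ℂ) - (ν m : ℂ)))) := by
    refine tendsto_finset_prod _ ?_
    intro j hj
    have hjm : j ≠ m := (mem_erase.mp hj).1
    have hw1 : ((ν j : ℂ) - (ν m : ℂ)) ≠ 0 := by
      rw [sub_ne_zero]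
      exact_mod_cast fun h => hjm (hν (by exact_mod_cast h))
    have hw2 : ((ν j : ℂ) - z) ≠ 0 := by
      rw [sub_ne_zero]
      exact fun h => hz j h.symm
    -- rewrite the ratio via Gamma_add_one
    have heq : ∀ᶠ a : ℝ in 𝓝[>] 0,
        Complex.Gamma ((a : ℂ) * ((ν j : ℂ) - (ν m : ℂ))) /
          Complex.Gamma ((a : ℂ) * ((ν j : ℂ) - z)) =
        (Complex.Gamma ((a : ℂ) * ((ν j : ℂ) - (ν m : ℂ)) + 1) /
          Complex.Gamma ((a : ℂ) * ((ν j : ℂ) - z) + 1)) *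
        (((ν j : ℂ) - z) / ((ν j : ℂ) - (ν m : ℂ))) := by
      filter_upwards [self_mem_nhdsWithin] with a ha
      have ha0 : (a : ℂ) ≠ 0 := by exact_mod_cast ne_of_gt ha
      have h1 : (a : ℂ) * ((ν j : ℂ) - (ν m : ℂ)) ≠ 0 := mul_ne_zero ha0 hw1
      have h2 : (a : ℂ) * ((ν j : ℂ) - z) ≠ 0 := mul_ne_zero ha0 hw2
      rw [Complex.Gamma_add_one _ h1, Complex.Gamma_add_one _ h2]
      rcases eq_or_ne (Complex.Gamma ((a : ℂ) * ((ν j : ℂ) - z))) 0 with h0 | h0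
      · simp [h0]
      · field_simp
    rw [show ((ν j : ℂ) - z) / ((ν j : ℂ) - (ν m : ℂ)) =
        ((1:ℂ)/1) * (((ν j : ℂ) - z) / ((ν j : ℂ) - (ν m : ℂ))) by ring]
    refine Tendsto.congr' (heq.mono fun a h => h.symm) ?_
    exact ((gamma_shift_tendsto _).div (gamma_shift_tendsto _) one_ne_zero).mul
      tendsto_const_nhds
  simpa using hfirst.mul hprod
end

section
/- Let t > 0, a > 0, let ν₁, …, ν_N be distinct real numbers, m ∈ {1,…,N}, and let x' ∈ ℝ satisfy x' ≠ ν_m − n/a for every positive integer n. Then the function y ↦ e^{−y²/(2t)} · Φ_ν^{ν_m,a}(x' + iy) is Lebesgue integrable on ℝ. -/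
open Finset MeasureTheory Complex

lemma myAbsGammaLe {s : ℂ} (hs : 0 < s.re) :
    ‖Complex.Gamma s‖ ≤ Real.Gamma s.re := by
  rw [Complex.Gamma_eq_integral hs, Real.Gamma_eq_integral hs,
    Complex.GammaIntegral]
  refine (norm_integral_le_integral_norm _).trans_eq ?_
  refine setIntegral_congr_fun measurableSet_Ioi fun x hx => ?_
  rw [norm_mul, Complex.norm_real, Real.norm_eq_abs,
    _root_.abs_of_nonneg (Real.exp_pos _).le, Complex.norm_cpow_eq_rpow_re_of_pos hx,
    Complex.sub_re, Complex.one_re]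

lemma stepGamma (z : ℂ) (hz : 1 ≤ |z.im|) :
    ‖Complex.Gamma z‖ ≤ ‖Complex.Gamma (z + 1)‖ := by
  have hz0 : z ≠ 0 := by
    intro h; rw [h] at hz; simp at hz; linarith
  rw [Complex.Gamma_add_one z hz0, norm_mul]
  have h1 : (1:ℝ) ≤ ‖z‖ := le_trans hz (Complex.abs_im_le_norm z)
  nlinarith [norm_nonneg (Complex.Gamma z)]

lemma iterGamma (k : ℕ) (z : ℂ) (hz : 1 ≤ |z.im|) :
    ‖Complex.Gamma z‖ ≤ ‖Complex.Gamma (z + k)‖ := by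
  induction k with
  | zero => simp
  | succ n ih =>
      refine ih.trans ?_
      have := stepGamma (z + n) (by simpa using hz)
      push_cast
      convert this using 3
      case e'_2 => rfl
      ring

lemma absGammaVert (c : ℝ) : ∃ K : ℝ, 0 < K ∧ ∀ z : ℂ, z.re = c → 1 ≤ |z.im| →
    ‖Complex.Gamma z‖ ≤ K := by
  set k : ℕ := ⌊|c|⌋₊ + 1 with hk
  have hck : (0:ℝ) < c + k := by
    have h1 : |c| < ⌊|c|⌋₊ + 1 := Nat.lt_floor_add_one _
    have h2 : -c ≤ |c| := neg_le_abs c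
    push_cast [hk]; linarith
  refine ⟨Real.Gamma (c + k), Real.Gamma_pos_of_pos hck, fun z hre him => ?_⟩
  refine (iterGamma k z him).trans ?_
  have hre2 : (z + k).re = c + k := by simp [hre]
  have := myAbsGammaLe (s := z + k) (by rw [hre2]; exact hck)
  rwa [hre2] at this

lemma absSinLe (w : ℂ) : ‖Complex.sin w‖ ≤ Real.exp |w.im| := by
  rw [Complex.sin]
  rw [norm_div, norm_mul, Complex.norm_I, mul_one]
  have h1 : ‖Complex.exp (-w * Complex.I)‖ ≤ Real.exp |w.im| := by
    rw [Complex.norm_exp]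
    refine Real.exp_le_exp.2 ?_
    simp [Complex.mul_re]
    exact le_abs_self _
  have h2 : ‖Complex.exp (w * Complex.I)‖ ≤ Real.exp |w.im| := by
    rw [Complex.norm_exp]
    refine Real.exp_le_exp.2 ?_
    simp [Complex.mul_re]
    exact neg_le_abs _
  have := (norm_sub_le (Complex.exp (-w * Complex.I)) (Complex.exp (w * Complex.I)))
  have habs2 : ‖(2:ℂ)‖ = 2 := by norm_num
  rw [habs2]
  linarith

lemma absInvGammaVert (c : ℝ) : ∃ K : ℝ, 0 < K ∧ ∀ z : ℂ, z.re = c → 1 ≤ |z.im| →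
    ‖(Complex.Gamma z)⁻¹‖ ≤ K * Real.exp (Real.pi * |z.im|) := by
  obtain ⟨K', hK'pos, hK'⟩ := absGammaVert (1 - c)
  refine ⟨K' / Real.pi, div_pos hK'pos Real.pi_pos, fun z hre him => ?_⟩
  have himne : z.im ≠ 0 := by intro h; rw [h] at him; simp at him; linarith
  have hπ : (Real.pi : ℂ) ≠ 0 := Complex.ofReal_ne_zero.2 Real.pi_ne_zero
  have hsin : Complex.sin (Real.pi * z) ≠ 0 := by
    intro h
    rw [Complex.sin_eq_zero_iff] at h
    obtain ⟨n, hn⟩ := h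
    have := congrArg Complex.im hn
    simp [Complex.mul_im] at this
    exact himne this
  have hrefl := Complex.Gamma_mul_Gamma_one_sub z
  have hΓ : Complex.Gamma z ≠ 0 := by
    intro h
    rw [h, zero_mul] at hrefl
    exact (div_ne_zero hπ hsin) hrefl.symm
  have hinv : (Complex.Gamma z)⁻¹ = Complex.Gamma (1 - z) * Complex.sin (Real.pi * z) / Real.pi := by
    refine inv_eq_of_mul_eq_one_right ?_
    rw [mul_div_assoc', ← mul_assoc, hrefl]
    field_simp
  rw [hinv, norm_div, norm_mul, Complex.norm_real, Real.norm_eq_abs, _root_.abs_of_pos Real.pi_pos]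
  have hG : ‖Complex.Gamma (1 - z)‖ ≤ K' := by
    refine hK' _ (by simp [hre]) ?_
    simp [him]
  have hS : ‖Complex.sin (Real.pi * z)‖ ≤ Real.exp (Real.pi * |z.im|) := by
    refine (absSinLe _).trans (Real.exp_le_exp.2 ?_)
    rw [Complex.mul_im]
    simp [abs_mul, abs_of_pos Real.pi_pos]
  rw [div_mul_eq_mul_div]
  gcongr

noncomputable def PhiAux (N : ℕ) (a : ℝ) (ν : Fin N → ℝ) (m : Fin N) (x' : ℝ) (y : ℝ) : ℂ :=
  Complex.Gamma (1 - (a : ℂ) * ((ν m : ℂ) - ((x' : ℂ) + Complex.I * (y : ℂ)))) *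
    ∏ j ∈ univ.erase m,
      Complex.Gamma ((a : ℂ) * ((ν j : ℂ) - (ν m : ℂ))) /
        Complex.Gamma ((a : ℂ) * ((ν j : ℂ) - ((x' : ℂ) + Complex.I * (y : ℂ))))

lemma arg0_eq (N : ℕ) (a : ℝ) (ν : Fin N → ℝ) (m : Fin N) (x' : ℝ) (y : ℝ) :
    (1 - (a : ℂ) * ((ν m : ℂ) - ((x' : ℂ) + Complex.I * (y : ℂ)))) =
      ((1 - a * (ν m - x') : ℝ) : ℂ) + ((a * y : ℝ) : ℂ) * Complex.I := by
  push_cast; ring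

lemma argj_eq (N : ℕ) (a : ℝ) (ν : Fin N → ℝ) (j : Fin N) (x' : ℝ) (y : ℝ) :
    ((a : ℂ) * ((ν j : ℂ) - ((x' : ℂ) + Complex.I * (y : ℂ)))) =
      ((a * (ν j - x') : ℝ) : ℂ) + ((-(a * y) : ℝ) : ℂ) * Complex.I := by
  push_cast; ring

lemma phiAux_continuous (N : ℕ) (a : ℝ) (ha : 0 < a) (ν : Fin N → ℝ) (m : Fin N) (x' : ℝ)
    (hx' : ∀ n : ℕ, 0 < n → x' ≠ ν m - (n : ℝ) / a) :
    Continuous (PhiAux N a ν m x') := by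
  unfold PhiAux
  refine Continuous.mul ?_ ?_
  · rw [continuous_iff_continuousAt]
    intro y
    have harg : Continuous (fun y : ℝ =>
        (1 - (a : ℂ) * ((ν m : ℂ) - ((x' : ℂ) + Complex.I * (y : ℂ))))) := by fun_prop
    refine ContinuousAt.comp ?_ harg.continuousAt
    refine (Complex.differentiableAt_Gamma _ fun n => ?_).continuousAt
    intro hcon
    rw [arg0_eq] at hcon
    rw [Complex.ext_iff] at hcon
    simp at hcon
    obtain ⟨h1, h2⟩ := hcon
    refine hx' (n + 1) (Nat.succ_pos n) ?_
    have hnx : ν m - x' = ((n : ℝ) + 1) / a := by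
      field_simp
      linarith
    push_cast
    linarith
  · refine continuous_finset_prod _ fun j _ => ?_
    simp_rw [div_eq_mul_inv]
    refine continuous_const.mul ?_
    exact Complex.differentiable_one_div_Gamma.continuous.comp (by fun_prop)

lemma phiAux_bound (N : ℕ) (a : ℝ) (ha : 0 < a) (ν : Fin N → ℝ) (m : Fin N) (x' : ℝ) :
    ∃ C : ℝ, 0 ≤ C ∧ ∀ y : ℝ, 1 ≤ a * |y| →
      ‖PhiAux N a ν m x' y‖ ≤ C * Real.exp (Real.pi * a * N * |y|) := by
  obtain ⟨K0, hK0pos, hK0⟩ := absGammaVert (1 - a * (ν m - x'))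
  choose K hKpos hK using fun j : Fin N => absInvGammaVert (a * (ν j - x'))
  set G : Fin N → ℝ := fun j =>
    ‖Complex.Gamma ((a : ℂ) * ((ν j : ℂ) - (ν m : ℂ)))‖ with hG
  have hGK : ∀ j ∈ univ.erase m, (0:ℝ) ≤ G j * K j := fun j _ =>
    mul_nonneg (by rw [hG]; exact norm_nonneg _) (hKpos j).le
  refine ⟨K0 * ∏ j ∈ univ.erase m, (G j * K j),
    mul_nonneg hK0pos.le (Finset.prod_nonneg hGK), fun y hy => ?_⟩
  have hay : 0 < a * |y| := lt_of_lt_of_le one_pos hy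
  unfold PhiAux
  rw [norm_mul, norm_prod]
  have hterm : ∀ j ∈ univ.erase m,
      ‖Complex.Gamma ((a : ℂ) * ((ν j : ℂ) - (ν m : ℂ))) /
          Complex.Gamma ((a : ℂ) * ((ν j : ℂ) - ((x' : ℂ) + Complex.I * (y : ℂ))))‖ ≤
        G j * K j * Real.exp (Real.pi * (a * |y|)) := by
    intro j _
    rw [div_eq_mul_inv, norm_mul]
    have him : |(((a * (ν j - x') : ℝ) : ℂ) + ((-(a * y) : ℝ) : ℂ) * Complex.I).im| = a * |y| := by
      simp [abs_mul, abs_of_pos ha]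
    have := hK j (((a * (ν j - x') : ℝ) : ℂ) + ((-(a * y) : ℝ) : ℂ) * Complex.I)
      (by simp) (by rw [him]; exact hy)
    rw [him] at this
    rw [argj_eq]
    rw [mul_assoc]
    exact mul_le_mul_of_nonneg_left this (norm_nonneg _)
  have h0 : ‖Complex.Gamma
      (1 - (a : ℂ) * ((ν m : ℂ) - ((x' : ℂ) + Complex.I * (y : ℂ))))‖ ≤ K0 := by
    rw [arg0_eq]
    refine hK0 _ (by simp) ?_
    simp [abs_mul, abs_of_pos ha]
    exact hy
  calc ‖Complex.Gamma (1 - (a : ℂ) * ((ν m : ℂ) - ((x' : ℂ) + Complex.I * (y : ℂ))))‖ *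
        ∏ j ∈ univ.erase m, ‖Complex.Gamma ((a : ℂ) * ((ν j : ℂ) - (ν m : ℂ))) /
          Complex.Gamma ((a : ℂ) * ((ν j : ℂ) - ((x' : ℂ) + Complex.I * (y : ℂ))))‖
      ≤ K0 * ∏ j ∈ univ.erase m, (G j * K j * Real.exp (Real.pi * (a * |y|))) := by
        refine mul_le_mul h0 (Finset.prod_le_prod (fun j _ => norm_nonneg _) hterm)
          (Finset.prod_nonneg fun j _ => norm_nonneg _) hK0pos.le
    _ = K0 * ((∏ j ∈ univ.erase m, (G j * K j)) *
          Real.exp (Real.pi * (a * |y|)) ^ (univ.erase m).card) := by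
        rw [Finset.prod_mul_distrib, Finset.prod_const]
    _ ≤ (K0 * ∏ j ∈ univ.erase m, (G j * K j)) * Real.exp (Real.pi * a * N * |y|) := by
        rw [mul_assoc]
        refine mul_le_mul_of_nonneg_left ?_ hK0pos.le
        refine mul_le_mul_of_nonneg_left ?_ (Finset.prod_nonneg hGK)
        rw [← Real.exp_nat_mul]
        refine Real.exp_le_exp.2 ?_
        have hcard : ((univ.erase m).card : ℝ) ≤ N := by
          calc ((univ.erase m).card : ℝ) ≤ ((univ : Finset (Fin N)).card : ℝ) := by
                exact_mod_cast Finset.card_le_card (Finset.erase_subset _ _)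
            _ = N := by simp
        have h1 : (0:ℝ) ≤ Real.pi * (a * |y|) := by positivity
        nlinarith

/-- For `t > 0` and `x'` avoiding the poles `ν_m − n/a`, the function
`y ↦ e^{−y²/(2t)} Φ_ν^{ν_m,a}(x' + iy)` is Lebesgue integrable on `ℝ`. -/
theorem phi_lifting_gaussian_integrable (N : ℕ) (t a : ℝ) (ht : 0 < t) (ha : 0 < a)
    (ν : Fin N → ℝ) (hν : Function.Injective ν) (m : Fin N) (x' : ℝ)
    (hx' : ∀ n : ℕ, 0 < n → x' ≠ ν m - (n : ℝ) / a) :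
    Integrable (fun y : ℝ =>
      (Real.exp (-y ^ 2 / (2 * t)) : ℂ) *
        (Complex.Gamma (1 - (a : ℂ) * ((ν m : ℂ) - ((x' : ℂ) + Complex.I * (y : ℂ)))) *
          ∏ j ∈ univ.erase m,
            Complex.Gamma ((a : ℂ) * ((ν j : ℂ) - (ν m : ℂ))) /
              Complex.Gamma ((a : ℂ) * ((ν j : ℂ) - ((x' : ℂ) + Complex.I * (y : ℂ)))))) := by
  show Integrable (fun y : ℝ => (Real.exp (-y ^ 2 / (2 * t)) : ℂ) * PhiAux N a ν m x' y) volume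
  have hFcont := phiAux_continuous N a ha ν m x' hx'
  obtain ⟨C, hCnn, hbig⟩ := phiAux_bound N a ha ν m x'
  set A : ℝ := Real.pi * a * N with hA
  have hAnn : 0 ≤ A := by positivity
  -- bound on the compact part
  obtain ⟨B, hB⟩ := (isCompact_Icc (a := -(1/a)) (b := 1/a)).exists_bound_of_continuousOn
    hFcont.continuousOn
  set D : ℝ := max C 0 + max B 0 with hD
  have hDnn : 0 ≤ D := by positivity
  have hglob : ∀ y : ℝ, ‖PhiAux N a ν m x' y‖ ≤ D * Real.exp (A * |y|) := by
    intro y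
    have hexp1 : 1 ≤ Real.exp (A * |y|) := Real.one_le_exp (by positivity)
    rcases le_or_gt 1 (a * |y|) with h | h
    · refine (hbig y h).trans ?_
      have : C ≤ D := le_add_of_le_of_nonneg (le_max_left _ _) (le_max_right _ _)
      exact mul_le_mul_of_nonneg_right this (Real.exp_pos _).le
    · have hy : y ∈ Set.Icc (-(1/a)) (1/a) := by
        have : |y| ≤ 1 / a := by
          rw [le_div_iff₀ ha]
          nlinarith [abs_nonneg y]
        exact abs_le.mp this |> fun ⟨h1, h2⟩ => ⟨h1, h2⟩
      have := hB y hy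
      calc ‖PhiAux N a ν m x' y‖ ≤ B := this
        _ ≤ D := le_add_of_nonneg_of_le (le_max_right _ _) (le_max_left _ _)
        _ ≤ D * Real.exp (A * |y|) := by nlinarith
  refine Integrable.mono'
    (g := fun y : ℝ => (D * Real.exp (A ^ 2 * t)) * Real.exp (-(1/(4*t)) * y ^ 2))
    ((integrable_exp_neg_mul_sq (by positivity : (0:ℝ) < 1/(4*t))).const_mul _)
    ?_ ?_
  · exact (Continuous.mul (Complex.continuous_ofReal.comp (by fun_prop)) hFcont).aestronglyMeasurable
  · refine Filter.Eventually.of_forall fun y => ?_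
    rw [norm_mul, Complex.norm_real, Real.norm_eq_abs, Real.abs_exp]
    calc Real.exp (-y ^ 2 / (2 * t)) * ‖PhiAux N a ν m x' y‖
        ≤ Real.exp (-y ^ 2 / (2 * t)) * (D * Real.exp (A * |y|)) :=
          mul_le_mul_of_nonneg_left (hglob y) (Real.exp_pos _).le
      _ = D * Real.exp (A * |y| + -y ^ 2 / (2 * t)) := by
          rw [Real.exp_add]; ring
      _ ≤ D * Real.exp (A ^ 2 * t + -(1/(4*t)) * y ^ 2) := by
          refine mul_le_mul_of_nonneg_left (Real.exp_le_exp.2 ?_) hDnn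
          have key : A * |y| ≤ A ^ 2 * t + y ^ 2 / (4 * t) := by
            rw [← sub_nonneg]
            have he : A ^ 2 * t + y ^ 2 / (4 * t) - A * |y| = (|y| - 2 * A * t) ^ 2 / (4 * t) := by
              field_simp
              ring_nf
              nlinarith [_root_.sq_abs y]
            rw [he]
            positivity
          have e2 : -y ^ 2 / (2 * t) = -(1 / (4 * t)) * y ^ 2 - y ^ 2 / (4 * t) := by
            field_simp
            ring
          linarith [key, e2]
      _ = D * Real.exp (A ^ 2 * t) * Real.exp (-(1/(4*t)) * y ^ 2) := by
          rw [Real.exp_add]; ring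
end

section
/- Let N ≥ 1, let f₁, …, f_N, g₁, …, g_N : ℝ → ℂ and χ : ℝ → ℝ be measurable, and suppose that for all j, k the function x ↦ χ(x)·g_j(x)·f_k(x) is Lebesgue integrable on ℝ. Define K(x, x') = Σ_{j=1}^N f_j(x)·g_j(x') and B_{jk} = ∫_ℝ χ(x)·g_j(x)·f_k(x) dx. Then Σ_{L=0}^N ((−1)^L / L!) ∫_{ℝ^L} ∏_{i=1}^L χ(x_i) · det_{1 ≤ i,k ≤ L}[K(x_i, x_k)] dx₁⋯dx_L = det_{1 ≤ j,k ≤ N}[δ_{jk} − B_{jk}], where the L = 0 term is 1. (The Fredholm determinant of a rank-N kernel reduces to an N × N matrix determinant.) -/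
open Finset MeasureTheory

private lemma det_add_one_eq_sum {n : Type*} [Fintype n] [DecidableEq n] (A : Matrix n n ℂ) :
    (A + 1).det = ∑ S : Finset n,
      (A.submatrix (Subtype.val : {x // x ∈ S} → n) Subtype.val).det := by
  have h := (Matrix.detRowAlternating (R := ℂ) (n := n)).toMultilinearMap.map_add_univ
    A (1 : Matrix n n ℂ)
  have h' : (A + 1).det = ∑ S : Finset n,
      (Matrix.of (S.piecewise (A : n → n → ℂ) (1 : Matrix n n ℂ))).det := h
  refine h'.trans (Finset.sum_congr rfl fun S _ => ?_)
  have hsub : (Matrix.of (S.piecewise (A : n → n → ℂ) (1 : Matrix n n ℂ))).submatrix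
      (Equiv.sumCompl (· ∈ S)) (Equiv.sumCompl (· ∈ S)) =
      Matrix.fromBlocks (A.submatrix Subtype.val Subtype.val)
        (A.submatrix Subtype.val Subtype.val) 0 1 := by
    ext i j
    cases i with
    | inl a =>
      cases j with
      | inl b => simp [Finset.piecewise, a.2]
      | inr b => simp [Finset.piecewise, a.2]
    | inr a =>
      cases j with
      | inl b =>
        have hne : (a : n) ≠ (b : n) := fun h => a.2 (h ▸ b.2)
        simp [Finset.piecewise, a.2, Matrix.one_apply, hne]
      | inr b =>
        simp [Finset.piecewise, a.2, Matrix.one_apply, Subtype.ext_iff]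
  rw [← Matrix.det_submatrix_equiv_self (Equiv.sumCompl (· ∈ S)), hsub,
    Matrix.det_fromBlocks_zero₂₁, Matrix.det_one, mul_one]

private lemma sum_det_submatrix {n : Type*} [Fintype n] [DecidableEq n] (A : Matrix n n ℂ)
    (L : ℕ) :
    ∑ φ : Fin L → n, (A.submatrix φ φ).det
      = (Nat.factorial L : ℂ) * ∑ S ∈ Finset.powersetCard L (Finset.univ : Finset n),
          (A.submatrix (Subtype.val : {x // x ∈ S} → n) Subtype.val).det := by
  classical
  rw [← Finset.sum_filter_add_sum_filter_not Finset.univ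
    (fun φ : Fin L → n => Function.Injective φ)]
  have h0 : ∑ φ ∈ Finset.univ.filter (fun φ : Fin L → n => ¬ Function.Injective φ),
      (A.submatrix φ φ).det = 0 := by
    refine Finset.sum_eq_zero fun φ hφ => ?_
    obtain ⟨a, b, hab, hne⟩ :=
      Function.not_injective_iff.mp (Finset.mem_filter.mp hφ).2
    exact Matrix.det_zero_of_row_eq hne (funext fun k => by simp [hab])
  rw [h0, add_zero]
  have hmaps : ∀ φ ∈ Finset.univ.filter (fun φ : Fin L → n => Function.Injective φ),
      Finset.image φ Finset.univ ∈ Finset.powersetCard L (Finset.univ : Finset n) := by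
    intro φ hφ
    rw [Finset.mem_powersetCard]
    exact ⟨Finset.subset_univ _, by
      rw [Finset.card_image_of_injective _ (Finset.mem_filter.mp hφ).2, Finset.card_fin]⟩
  rw [← Finset.sum_fiberwise_of_maps_to hmaps (fun φ => (A.submatrix φ φ).det),
    Finset.mul_sum]
  refine Finset.sum_congr rfl fun S hS => ?_
  have hcard : S.card = L := (Finset.mem_powersetCard.mp hS).2
  have hdet : ∀ φ ∈ (Finset.univ.filter (fun φ : Fin L → n => Function.Injective φ)).filter
      (fun φ => Finset.image φ Finset.univ = S),
      (A.submatrix φ φ).det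
        = (A.submatrix (Subtype.val : {x // x ∈ S} → n) Subtype.val).det := by
    intro φ hφ
    obtain ⟨hφ1, hφ2⟩ := Finset.mem_filter.mp hφ
    have hinj : Function.Injective φ := (Finset.mem_filter.mp hφ1).2
    have hmem : ∀ i, φ i ∈ S := fun i => hφ2 ▸ Finset.mem_image_of_mem φ (Finset.mem_univ i)
    have hbij : Function.Bijective (fun i => (⟨φ i, hmem i⟩ : {x // x ∈ S})) := by
      rw [Fintype.bijective_iff_injective_and_card]
      constructor
      · exact fun a b h => hinj (congrArg Subtype.val h)
      · simp [Fintype.card_coe, hcard]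
    rw [← Matrix.det_submatrix_equiv_self (Equiv.ofBijective _ hbij)
      (A.submatrix (Subtype.val : {x // x ∈ S} → n) Subtype.val)]
    rfl
  rw [Finset.sum_congr rfl hdet, Finset.sum_const]
  have hcard2 : ((Finset.univ.filter (fun φ : Fin L → n => Function.Injective φ)).filter
      (fun φ => Finset.image φ Finset.univ = S)).card = Nat.factorial L := by
    have hbijcard : ((Finset.univ.filter (fun φ : Fin L → n => Function.Injective φ)).filter
        (fun φ => Finset.image φ Finset.univ = S)).card
        = (Finset.univ : Finset (Fin L ↪ {x // x ∈ S})).card := by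
      refine Finset.card_bij'
        (i := fun φ hφ => ⟨fun a =>
          ⟨φ a, (Finset.mem_filter.mp hφ).2 ▸ Finset.mem_image_of_mem φ (Finset.mem_univ a)⟩,
          fun a b h => (Finset.mem_filter.mp (Finset.mem_filter.mp hφ).1).2
            (congrArg Subtype.val h)⟩)
        (j := fun e _ => fun a => (e a : n)) (fun _ _ => Finset.mem_univ _) ?_ ?_ ?_
      · intro e _
        have hinj : Function.Injective (fun a => (e a : n)) :=
          fun a b h => e.injective (Subtype.ext h)
        have hsubset : Finset.image (fun a => (e a : n)) Finset.univ ⊆ S := by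
          intro x hx
          obtain ⟨a, _, rfl⟩ := Finset.mem_image.mp hx
          exact (e a).2
        have himg : Finset.image (fun a => (e a : n)) Finset.univ = S := by
          refine Finset.eq_of_subset_of_card_le hsubset ?_
          rw [Finset.card_image_of_injective _ hinj, Finset.card_fin, hcard]
        simp only [Finset.mem_filter, Finset.mem_univ, true_and]
        exact ⟨hinj, himg⟩
      all_goals (intros; rfl)
    rw [hbijcard, Finset.card_univ, Fintype.card_embedding_eq, Fintype.card_coe, hcard,
      Fintype.card_fin, Nat.descFactorial_self]
  rw [hcard2, nsmul_eq_mul]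

private lemma fredholm_integral_term (N L : ℕ) (f g : Fin N → ℝ → ℂ) (χ : ℝ → ℝ)
    (hint : ∀ j k : Fin N, Integrable (fun x : ℝ => (χ x : ℂ) * g j x * f k x)) :
    (∫ x : Fin L → ℝ, (∏ i : Fin L, (χ (x i) : ℂ)) *
        Matrix.det (Matrix.of fun i k : Fin L => ∑ j : Fin N, f j (x i) * g j (x k)))
      = ∑ φ : Fin L → Fin N,
          (((Matrix.of fun j k : Fin N =>
              ∫ x : ℝ, (χ x : ℂ) * g j x * f k x).submatrix φ φ)).det := by
  classical
  set B : Matrix (Fin N) (Fin N) ℂ :=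
    Matrix.of fun j k => ∫ x : ℝ, (χ x : ℂ) * g j x * f k x with hB
  have key : ∀ x : Fin L → ℝ,
      (∏ i : Fin L, (χ (x i) : ℂ)) *
        Matrix.det (Matrix.of fun i k : Fin L => ∑ j : Fin N, f j (x i) * g j (x k))
      = ∑ σ : Equiv.Perm (Fin L), ∑ φ : Fin L → Fin N,
          ((Equiv.Perm.sign σ : ℤ) : ℂ) *
            ∏ i : Fin L, ((χ (x i) : ℂ) * g (φ i) (x i) * f (φ (σ⁻¹ i)) (x i)) := by
    intro x
    rw [Matrix.det_apply', Finset.mul_sum]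
    refine Finset.sum_congr rfl fun σ _ => ?_
    have h1 : (∏ i : Fin L,
          (Matrix.of fun i k : Fin L => ∑ j : Fin N, f j (x i) * g j (x k)) (σ i) i)
        = ∑ φ : Fin L → Fin N, ∏ i : Fin L, f (φ i) (x (σ i)) * g (φ i) (x i) := by
      simp only [Matrix.of_apply]
      exact Fintype.prod_sum (fun i j => f j (x (σ i)) * g j (x i))
    rw [h1]
    rw [Finset.mul_sum, Finset.mul_sum]
    refine Finset.sum_congr rfl fun φ _ => ?_
    have h2 : ∏ i : Fin L, f (φ i) (x (σ i)) = ∏ i : Fin L, f (φ (σ⁻¹ i)) (x i) := by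
      rw [← Equiv.prod_comp σ (fun i => f (φ (σ⁻¹ i)) (x i))]
      simp
    simp only [Finset.prod_mul_distrib, h2]
    ring
  simp only [key]
  have hInt : ∀ (σ : Equiv.Perm (Fin L)) (φ : Fin L → Fin N),
      Integrable (fun x : Fin L → ℝ => ((Equiv.Perm.sign σ : ℤ) : ℂ) *
        ∏ i : Fin L, ((χ (x i) : ℂ) * g (φ i) (x i) * f (φ (σ⁻¹ i)) (x i))) := by
    intro σ φ
    exact (Integrable.fintype_prod (f := fun (i : Fin L) (t : ℝ) =>
      (χ t : ℂ) * g (φ i) t * f (φ (σ⁻¹ i)) t)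
      (fun i => hint (φ i) (φ (σ⁻¹ i)))).const_mul _
  rw [integral_finset_sum _ (fun σ _ => integrable_finset_sum _ (fun φ _ => hInt σ φ))]
  have hval : ∀ (σ : Equiv.Perm (Fin L)),
      (∫ x : Fin L → ℝ, ∑ φ : Fin L → Fin N, ((Equiv.Perm.sign σ : ℤ) : ℂ) *
        ∏ i : Fin L, ((χ (x i) : ℂ) * g (φ i) (x i) * f (φ (σ⁻¹ i)) (x i)))
      = ∑ φ : Fin L → Fin N, ((Equiv.Perm.sign σ : ℤ) : ℂ) *
          ∏ i : Fin L, B (φ i) (φ (σ⁻¹ i)) := by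
    intro σ
    rw [integral_finset_sum _ (fun φ _ => hInt σ φ)]
    refine Finset.sum_congr rfl fun φ _ => ?_
    rw [integral_const_mul]
    congr 1
    rw [volume_pi, integral_fintype_prod_eq_prod (ι := Fin L)
      (f := fun i t => (χ t : ℂ) * g (φ i) t * f (φ (σ⁻¹ i)) t)]
    rfl
  rw [Finset.sum_congr rfl (fun σ _ => hval σ)]
  rw [Finset.sum_comm]
  refine Finset.sum_congr rfl fun φ _ => ?_
  rw [Matrix.det_apply']
  refine Finset.sum_congr rfl fun σ _ => ?_
  congr 1
  refine (Fintype.prod_bijective σ σ.bijective _ _ fun i => ?_).symm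
  simp

/-- The (terminating) Fredholm expansion of `Det[δ(x−x') − K(x,x')χ(x')]` for the
finite-rank kernel `K(x,x') = Σ_j f_j(x) g_j(x')` reduces to the `N × N` determinant
`det[δ_{jk} − B_{jk}]` with `B_{jk} = ∫ χ(x) g_j(x) f_k(x) dx`. -/
theorem fredholm_det_finite_rank (N : ℕ) (hN : 1 ≤ N)
    (f g : Fin N → ℝ → ℂ) (χ : ℝ → ℝ)
    (hf : ∀ j, Measurable (f j)) (hg : ∀ j, Measurable (g j)) (hχ : Measurable χ)
    (hint : ∀ j k : Fin N, Integrable (fun x : ℝ => (χ x : ℂ) * g j x * f k x)) :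
    ∑ L ∈ Finset.range (N + 1),
        ((-1 : ℂ) ^ L / (Nat.factorial L : ℂ)) *
          ∫ x : Fin L → ℝ,
            (∏ i : Fin L, (χ (x i) : ℂ)) *
              Matrix.det (Matrix.of fun i k : Fin L =>
                ∑ j : Fin N, f j (x i) * g j (x k)) =
      Matrix.det (Matrix.of fun j k : Fin N =>
        (if j = k then (1 : ℂ) else 0) - ∫ x : ℝ, (χ x : ℂ) * g j x * f k x) := by
  classical
  set B : Matrix (Fin N) (Fin N) ℂ :=
    Matrix.of fun j k => ∫ x : ℝ, (χ x : ℂ) * g j x * f k x with hB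
  have hRHS : (Matrix.of fun j k : Fin N =>
      (if j = k then (1 : ℂ) else 0) - ∫ x : ℝ, (χ x : ℂ) * g j x * f k x) = -B + 1 := by
    ext j k
    simp [hB, Matrix.one_apply, sub_eq_neg_add]
  rw [hRHS, det_add_one_eq_sum (-B)]
  have step1 : ∀ L ∈ Finset.range (N + 1),
      ((-1 : ℂ) ^ L / (Nat.factorial L : ℂ)) *
        (∫ x : Fin L → ℝ, (∏ i : Fin L, (χ (x i) : ℂ)) *
          Matrix.det (Matrix.of fun i k : Fin L => ∑ j : Fin N, f j (x i) * g j (x k)))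
      = ∑ S ∈ Finset.powersetCard L (Finset.univ : Finset (Fin N)),
          ((-B).submatrix (Subtype.val : {x // x ∈ S} → Fin N) Subtype.val).det := by
    intro L _
    have hfac : (Nat.factorial L : ℂ) ≠ 0 :=
      Nat.cast_ne_zero.mpr (Nat.factorial_ne_zero L)
    rw [fredholm_integral_term N L f g χ hint, sum_det_submatrix B L, ← mul_assoc,
      div_mul_cancel₀ _ hfac, Finset.mul_sum]
    refine Finset.sum_congr rfl fun S hS => ?_
    have hcard : S.card = L := (Finset.mem_powersetCard.mp hS).2
    have hneg : ((-B).submatrix (Subtype.val : {x // x ∈ S} → Fin N) Subtype.val)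
        = -(B.submatrix (Subtype.val : {x // x ∈ S} → Fin N)
            (Subtype.val : {x // x ∈ S} → Fin N)) := rfl
    rw [hneg, Matrix.det_neg, Fintype.card_coe, hcard]
  rw [Finset.sum_congr rfl step1]
  have hrange : (N : ℕ) + 1 = (Finset.univ : Finset (Fin N)).card + 1 := by
    rw [Finset.card_fin]
  rw [hrange, ← Finset.sum_powerset (Finset.univ : Finset (Fin N))
    (fun S => ((-B).submatrix (Subtype.val : {x // x ∈ S} → Fin N) Subtype.val).det),
    Finset.powerset_univ]
end

section
/- Let t > 0, let ν₁, …, ν_N be real numbers, let χ : ℝ → ℝ be bounded and measurable, and let Φ₁, …, Φ_N : ℂ → ℂ be measurable functions such that for all j, k the function (v, w) ↦ Φ_j(v + iw)·p(t, v | ν_k)·p(t, w | 0) is Lebesgue integrable on ℝ². Define K(x, x') = Σ_{j=1}^N p(t, x | ν_j) · ∫_ℝ p(t, y | 0)·Φ_j(x' + iy) dy. Then Σ_{L=0}^N ((−1)^L / L!) ∫_{ℝ^L} ∏_{i=1}^L χ(x_i) · det_{1 ≤ i,k ≤ L}[K(x_i, x_k)] dx₁⋯dx_L = ∫_{ℝ^{2N}}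 det_{1 ≤ j,k ≤ N}[δ_{jk} − Φ_j(v_k + i w_k)·χ(v_k)] · ∏_{k=1}^N p(t, v_k | ν_k)·p(t, w_k | 0) dv₁⋯dv_N dw₁⋯dw_N. (This is the complex-Brownian-motion representation: v_k + i w_k is the position at time t of an independent complex Brownian motion started at ν_k.) -/
open Finset MeasureTheory Matrix

/-- Heat kernel: transition density of one-dimensional standard Brownian motion. -/
noncomputable def heatKernel (t y x : ℝ) : ℝ :=
  Real.exp (-(x - y) ^ 2 / (2 * t)) / Real.sqrt (2 * Real.pi * t)



lemma heatKernel_pos {t : ℝ} (ht : 0 < t) (y x : ℝ) : 0 < heatKernel t y x := by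
  unfold heatKernel
  positivity

lemma measurable_heatKernel {t : ℝ} (y : ℝ) : Measurable (fun x => heatKernel t x y) := by
  unfold heatKernel
  fun_prop

lemma integrable_heatKernel {t : ℝ} (ht : 0 < t) (y : ℝ) :
    Integrable (fun x => heatKernel t x y) := by
  unfold heatKernel
  have h : Integrable (fun x : ℝ => Real.exp (-(2*t)⁻¹ * x ^ 2)) :=
    integrable_exp_neg_mul_sq (by positivity)
  have h2 := (h.comp_sub_right y).div_const (Real.sqrt (2 * Real.pi * t))
  convert h2 using 2 with x
  ring_nf

lemma integral_heatKernel {t : ℝ} (ht : 0 < t) (y : ℝ) :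
    ∫ x : ℝ, heatKernel t x y = 1 := by
  unfold heatKernel
  rw [integral_div]
  have : ∫ x : ℝ, Real.exp (-(y - x) ^ 2 / (2 * t))
      = ∫ x : ℝ, Real.exp (-(2*t)⁻¹ * x ^ 2) := by
    rw [← integral_sub_right_eq_self (fun x => Real.exp (-(2*t)⁻¹ * x ^ 2)) y]
    congr 1 with x
    ring_nf
  rw [this, integral_gaussian]
  rw [div_eq_one_iff_eq (by positivity)]
  rw [show Real.pi / (2*t)⁻¹ = 2 * Real.pi * t by field_simp]


variable {N : ℕ}

lemma det_single_rows_off (s : Finset (Fin N)) (A : Matrix (Fin N) (Fin N) ℂ)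
    (h : ∀ i ∉ s, A i = Pi.single i 1) :
    A.det = (A.submatrix (Subtype.val : {x // x ∈ s} → Fin N) Subtype.val).det := by
  classical
  let e : {x // x ∈ s} ⊕ {x // x ∉ s} ≃ Fin N := Equiv.sumCompl (· ∈ s)
  rw [← Matrix.det_submatrix_equiv_self e A]
  have : A.submatrix e e = Matrix.fromBlocks
      (A.submatrix Subtype.val Subtype.val)
      (A.submatrix Subtype.val Subtype.val) 0 1 := by
    ext i j
    cases i with
    | inl a =>
      cases j with
      | inl b => rfl
      | inr b => rfl
    | inr a =>
      cases j with
      | inl b =>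
        simp only [submatrix_apply, Matrix.fromBlocks_apply₂₁, Matrix.zero_apply]
        have := h a.1 a.2
        show A (e (Sum.inr a)) (e (Sum.inl b)) = 0
        have he : e (Sum.inr a) = a.1 := rfl
        have he2 : e (Sum.inl b) = b.1 := rfl
        rw [he, he2, this, Pi.single_apply, if_neg]
        intro hh
        exact a.2 (hh ▸ b.2)
      | inr b =>
        show A (e (Sum.inr a)) (e (Sum.inr b)) = (1 : Matrix _ _ ℂ) a b
        have he : e (Sum.inr a) = a.1 := rfl
        have he2 : e (Sum.inr b) = b.1 := rfl
        rw [he, he2, h a.1 a.2, Pi.single_apply, Matrix.one_apply]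
        by_cases hab : a = b
        · simp [hab]
        · rw [if_neg, if_neg hab]
          intro hh
          exact hab (Subtype.ext hh.symm)
  rw [this, Matrix.det_fromBlocks_zero₂₁, Matrix.det_one, mul_one]

lemma det_one_add_eq_sum (A : Matrix (Fin N) (Fin N) ℂ) :
    (1 + A).det = ∑ s : Finset (Fin N),
      (A.submatrix (Subtype.val : {x // x ∈ s} → Fin N) Subtype.val).det := by
  classical
  have h1 : (1 + A) = Matrix.of (fun i => A i + Pi.single i 1) := by
    ext i j
    simp [Matrix.one_apply, Pi.single_apply, add_comm, eq_comm]
  rw [h1]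
  have key := (Matrix.detRowAlternating (R := ℂ) (n := Fin N)).map_add_univ
    (fun i => A i) (fun i => Pi.single i (1:ℂ))
  have h2 : (Matrix.of fun i => A i + Pi.single i 1).det
      = (Matrix.detRowAlternating (R := ℂ) (n := Fin N))
        ((fun i => A i) + fun i => Pi.single i (1:ℂ)) := rfl
  rw [h2, key]
  refine Finset.sum_congr rfl fun s _ => ?_
  have := det_single_rows_off s (Matrix.of (s.piecewise (fun i => A i) (fun i => Pi.single i (1:ℂ))))
    (fun i hi => by
      show s.piecewise (fun i => A i) (fun i => Pi.single i (1:ℂ)) i = _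
      rw [Finset.piecewise_eq_of_notMem _ _ _ hi])
  rw [show (Matrix.detRowAlternating (R := ℂ) (n := Fin N))
        (s.piecewise (fun i => A i) fun i => Pi.single i (1:ℂ))
      = (Matrix.of (s.piecewise (fun i => A i) (fun i => Pi.single i (1:ℂ)))).det from rfl, this]
  congr 1
  ext i j
  simp [Finset.piecewise_eq_of_mem _ _ _ i.2]

lemma sum_sign_prod_eq_det {L N : ℕ} (B : Matrix (Fin N) (Fin N) ℂ) (f : Fin L → Fin N) :
    ∑ σ : Equiv.Perm (Fin L), ((Equiv.Perm.sign σ : ℤ) : ℂ) * ∏ i, B (f i) (f (σ⁻¹ i))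
      = (B.submatrix f f).det := by
  classical
  have h1 : ∑ σ : Equiv.Perm (Fin L), ((Equiv.Perm.sign σ : ℤ) : ℂ) * ∏ i, B (f i) (f (σ⁻¹ i))
      = ∑ σ : Equiv.Perm (Fin L), ((Equiv.Perm.sign σ : ℤ) : ℂ) * ∏ i, B (f i) (f (σ i)) := by
    refine Fintype.sum_equiv (Equiv.inv (Equiv.Perm (Fin L))) _ _ fun σ => ?_
    simp [Equiv.Perm.sign_inv]
  rw [h1, ← Matrix.det_transpose, Matrix.det_apply']
  rfl

lemma sum_det_submatrix_s9 (L N : ℕ) (B : Matrix (Fin N) (Fin N) ℂ) :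
    ∑ f : Fin L → Fin N, (B.submatrix f f).det
      = (Nat.factorial L : ℂ) * ∑ s ∈ univ.filter (fun s : Finset (Fin N) => s.card = L),
          (B.submatrix (Subtype.val : {x // x ∈ s} → Fin N) Subtype.val).det := by
  classical
  have h0 : ∑ f : Fin L → Fin N, (B.submatrix f f).det
      = ∑ f ∈ univ.filter (fun f : Fin L → Fin N => Function.Injective f),
          (B.submatrix f f).det := by
    rw [Finset.sum_filter_of_ne]
    intro f _ hne
    by_contra hinj
    simp only [Function.Injective] at hinj
    push_neg at hinj
    obtain ⟨a, b, hab, hne2⟩ := hinj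
    exact hne (Matrix.det_zero_of_row_eq hne2 (by ext j; simp [Matrix.submatrix_apply, hab]))
  rw [h0]
  rw [← Finset.sum_fiberwise_of_maps_to (g := fun f : Fin L → Fin N => univ.image f)
    (t := univ.filter (fun s : Finset (Fin N) => s.card = L)) ?mapsto]
  case mapsto =>
    intro f hf
    simp only [Finset.mem_filter, Finset.mem_univ, true_and] at hf ⊢
    rw [Finset.card_image_of_injective _ hf, Finset.card_univ, Fintype.card_fin]
  rw [Finset.mul_sum]
  refine Finset.sum_congr rfl fun s hs => ?_
  simp only [Finset.mem_filter, Finset.mem_univ, true_and] at hs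
  have hdet : ∀ f ∈ (univ.filter (fun f : Fin L → Fin N => Function.Injective f)).filter
      (fun f => univ.image f = s),
      (B.submatrix f f).det
        = (B.submatrix (Subtype.val : {x // x ∈ s} → Fin N) Subtype.val).det := by
    intro f hf
    simp only [Finset.mem_filter, Finset.mem_univ, true_and] at hf
    obtain ⟨hinj, himg⟩ := hf
    have hiff : ∀ x, x ∈ Set.range f ↔ x ∈ s := by
      intro x
      rw [← himg]
      simp [Set.mem_range, Finset.mem_image]
    let e : Fin L ≃ {x // x ∈ s} :=
      (Equiv.ofInjective f hinj).trans (Equiv.subtypeEquivRight hiff)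
    have hval : ∀ i, (e i : Fin N) = f i := fun i => rfl
    have : B.submatrix f f
        = (B.submatrix (Subtype.val : {x // x ∈ s} → Fin N) Subtype.val).submatrix e e := by
      ext i j
      simp [Matrix.submatrix_apply, hval]
    rw [this, Matrix.det_submatrix_equiv_self]
  rw [Finset.sum_congr rfl hdet, Finset.sum_const, nsmul_eq_mul]
  congr 2
  -- cardinality of the fiber is L !
  have hcard : ((univ.filter (fun f : Fin L → Fin N => Function.Injective f)).filter
      (fun f => univ.image f = s)).card = Fintype.card (Fin L ≃ {x // x ∈ s}) := by
    rw [← Finset.card_univ]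
    refine Finset.card_bij' (fun f hf => ?i) (fun e _ => Subtype.val ∘ e) ?_ ?_ ?_ ?_
    case i =>
      have hf' : Function.Injective f ∧ univ.image f = s := by
        simpa using hf
      exact (Equiv.ofInjective f hf'.1).trans (Equiv.subtypeEquivRight (by
        intro x
        rw [← hf'.2]
        simp [Set.mem_range, Finset.mem_image]))
    · intro f hf
      exact Finset.mem_univ _
    · intro e he
      simp only [Finset.mem_filter, Finset.mem_univ, true_and]
      constructor
      · exact Subtype.val_injective.comp e.injective
      · ext x
        simp only [Finset.mem_image, Finset.mem_univ, true_and, Function.comp_apply]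
        constructor
        · rintro ⟨i, rfl⟩; exact (e i).2
        · intro hx; exact ⟨e.symm ⟨x, hx⟩, by simp⟩
    · intro f hf
      rfl
    · intro e he
      ext i
      rfl
  rw [hcard, Fintype.card_equiv (Fintype.equivOfCardEq (by simp [hs]))]
  simp

lemma fredholm_alg (N : ℕ) (B : Matrix (Fin N) (Fin N) ℂ) :
    ∑ L ∈ Finset.range (N + 1), ((-1 : ℂ) ^ L / (Nat.factorial L : ℂ)) *
        (∑ σ : Equiv.Perm (Fin L), ∑ f : Fin L → Fin N,
          ((Equiv.Perm.sign σ : ℤ) : ℂ) * ∏ i, B (f i) (f (σ⁻¹ i)))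
      = (1 - B).det := by
  classical
  have step1 : ∀ L, (∑ σ : Equiv.Perm (Fin L), ∑ f : Fin L → Fin N,
      ((Equiv.Perm.sign σ : ℤ) : ℂ) * ∏ i, B (f i) (f (σ⁻¹ i)))
      = (Nat.factorial L : ℂ) * ∑ s ∈ univ.filter (fun s : Finset (Fin N) => s.card = L),
          (B.submatrix (Subtype.val : {x // x ∈ s} → Fin N) Subtype.val).det := by
    intro L
    rw [Finset.sum_comm]
    rw [Finset.sum_congr rfl (fun f _ => sum_sign_prod_eq_det B f)]
    exact sum_det_submatrix_s9 L N B
  calc ∑ L ∈ Finset.range (N + 1), ((-1 : ℂ) ^ L / (Nat.factorial L : ℂ)) *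
        (∑ σ : Equiv.Perm (Fin L), ∑ f : Fin L → Fin N,
          ((Equiv.Perm.sign σ : ℤ) : ℂ) * ∏ i, B (f i) (f (σ⁻¹ i)))
      = ∑ L ∈ Finset.range (N + 1), ∑ s ∈ univ.filter (fun s : Finset (Fin N) => s.card = L),
          (-1 : ℂ) ^ s.card *
            (B.submatrix (Subtype.val : {x // x ∈ s} → Fin N) Subtype.val).det := by
        refine Finset.sum_congr rfl fun L _ => ?_
        rw [step1 L, Finset.mul_sum, Finset.mul_sum]
        refine Finset.sum_congr rfl fun s hs => ?_
        simp only [Finset.mem_filter] at hs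
        rw [hs.2]
        have hfac : (Nat.factorial L : ℂ) ≠ 0 := Nat.cast_ne_zero.2 (Nat.factorial_ne_zero L)
        field_simp
    _ = ∑ s : Finset (Fin N), (-1 : ℂ) ^ s.card *
            (B.submatrix (Subtype.val : {x // x ∈ s} → Fin N) Subtype.val).det := by
        rw [Finset.sum_fiberwise_of_maps_to]
        intro s _
        simp only [Finset.mem_range]
        exact Nat.lt_succ_of_le (by simpa using Finset.card_le_univ s)
    _ = ∑ s : Finset (Fin N),
            ((-B).submatrix (Subtype.val : {x // x ∈ s} → Fin N) Subtype.val).det := by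
        refine Finset.sum_congr rfl fun s _ => ?_
        have : ((-B).submatrix (Subtype.val : {x // x ∈ s} → Fin N)
              (Subtype.val : {x // x ∈ s} → Fin N))
            = -(B.submatrix (Subtype.val : {x // x ∈ s} → Fin N)
              (Subtype.val : {x // x ∈ s} → Fin N)) := by
          ext i j; simp
        rw [this, Matrix.det_neg, Fintype.card_coe]
    _ = (1 + (-B)).det := (det_one_add_eq_sum (-B)).symm
    _ = (1 - B).det := by rw [sub_eq_add_neg]
noncomputable def psiF (t : ℝ) (Φj : ℂ → ℂ) (v : ℝ) : ℂ :=
  ∫ y : ℝ, (heatKernel t y 0 : ℂ) * Φj ((v : ℂ) + Complex.I * (y : ℂ))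

noncomputable def GFun (t : ℝ) (νk : ℝ) (χ : ℝ → ℝ) (Φj : ℂ → ℂ) (r : ℝ) : ℂ :=
  (χ r : ℂ) * (heatKernel t r νk : ℂ) * psiF t Φj r

section Analytic

variable {t : ℝ} (ht : 0 < t) {χ : ℝ → ℝ} (hχ : Measurable χ) (hχbd : ∃ C : ℝ, ∀ x, |χ x| ≤ C)
  {Φj : ℂ → ℂ} {νk : ℝ}
  (hint1 : Integrable (fun q : ℝ × ℝ =>
    Φj ((q.1 : ℂ) + Complex.I * (q.2 : ℂ)) *
      (heatKernel t q.1 νk : ℂ) * (heatKernel t q.2 0 : ℂ)))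

include ht hint1 in
lemma integrable_pPsi : Integrable (fun v : ℝ =>
    (heatKernel t v νk : ℂ) * psiF t Φj v) := by
  have h1 := hint1.integral_prod_left
  refine h1.congr (Filter.Eventually.of_forall fun v => ?_)
  show (∫ w : ℝ, Φj ((v : ℂ) + Complex.I * (w : ℂ)) *
      (heatKernel t v νk : ℂ) * (heatKernel t w 0 : ℂ)) = _
  have heq : (fun w : ℝ => Φj ((v : ℂ) + Complex.I * (w : ℂ)) *
      (heatKernel t v νk : ℂ) * (heatKernel t w 0 : ℂ))
      = fun w : ℝ => (heatKernel t v νk : ℂ) *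
        ((heatKernel t w 0 : ℂ) * Φj ((v : ℂ) + Complex.I * (w : ℂ))) := by
    funext w; ring
  rw [heq, integral_const_mul]
  rfl

include ht hχ hχbd hint1 in
lemma integrable_GFun : Integrable (GFun t νk χ Φj) := by
  obtain ⟨C, hC⟩ := hχbd
  have h2 := (integrable_pPsi ht hint1).bdd_mul
    ((Complex.measurable_ofReal.comp hχ).aestronglyMeasurable)
    (c := C) (Filter.Eventually.of_forall fun x => by simpa [Complex.norm_real] using hC x)
  refine h2.congr (Filter.Eventually.of_forall fun v => ?_)
  simp only [Function.comp_apply, GFun, mul_assoc]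

include ht hχ hχbd hint1 in
lemma integrable_FFun (c : ℂ) : Integrable (fun q : ℝ × ℝ =>
    (c - Φj ((q.1 : ℂ) + Complex.I * (q.2 : ℂ)) * (χ q.1 : ℂ)) *
      (heatKernel t q.1 νk : ℂ) * (heatKernel t q.2 0 : ℂ)) := by
  obtain ⟨C, hC⟩ := hχbd
  have t1 : Integrable (fun q : ℝ × ℝ =>
      (heatKernel t q.1 νk : ℂ) * (heatKernel t q.2 0 : ℂ)) := by
    rw [show (volume : Measure (ℝ × ℝ)) = volume.prod volume from rfl]
    exact (integrable_heatKernel ht νk).ofReal.mul_prod (integrable_heatKernel ht 0).ofReal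
  have t2 : Integrable (fun q : ℝ × ℝ =>
      (χ q.1 : ℂ) * (Φj ((q.1 : ℂ) + Complex.I * (q.2 : ℂ)) *
        (heatKernel t q.1 νk : ℂ) * (heatKernel t q.2 0 : ℂ))) :=
    hint1.bdd_mul ((Complex.measurable_ofReal.comp (hχ.comp measurable_fst)).aestronglyMeasurable)
      (c := C) (Filter.Eventually.of_forall fun x => by simpa [Complex.norm_real] using hC x.1)
  have h3 := (t1.const_mul c).sub t2
  refine h3.congr (Filter.Eventually.of_forall fun q => ?_)
  simp only [Pi.sub_apply]
  ring

include ht hχ hχbd hint1 in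
lemma integral_FFun (c : ℂ) : ∫ q : ℝ × ℝ,
    (c - Φj ((q.1 : ℂ) + Complex.I * (q.2 : ℂ)) * (χ q.1 : ℂ)) *
      (heatKernel t q.1 νk : ℂ) * (heatKernel t q.2 0 : ℂ)
    = c - ∫ r : ℝ, GFun t νk χ Φj r := by
  obtain ⟨C, hC⟩ := hχbd
  have t1 : Integrable (fun q : ℝ × ℝ =>
      c * ((heatKernel t q.1 νk : ℂ) * (heatKernel t q.2 0 : ℂ))) := by
    rw [show (volume : Measure (ℝ × ℝ)) = volume.prod volume from rfl]
    exact ((integrable_heatKernel ht νk).ofReal.mul_prod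
      (integrable_heatKernel ht 0).ofReal).const_mul c
  have t2 : Integrable (fun q : ℝ × ℝ =>
      (χ q.1 : ℂ) * Φj ((q.1 : ℂ) + Complex.I * (q.2 : ℂ)) *
        (heatKernel t q.1 νk : ℂ) * (heatKernel t q.2 0 : ℂ)) := by
    have := hint1.bdd_mul
      ((Complex.measurable_ofReal.comp (hχ.comp measurable_fst)).aestronglyMeasurable)
      (c := C) (Filter.Eventually.of_forall fun x => by simpa [Complex.norm_real] using hC x.1)
    refine this.congr (Filter.Eventually.of_forall fun q => ?_)
    simp only [Function.comp_apply]
    ring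
  have hsplit : (fun q : ℝ × ℝ =>
      (c - Φj ((q.1 : ℂ) + Complex.I * (q.2 : ℂ)) * (χ q.1 : ℂ)) *
        (heatKernel t q.1 νk : ℂ) * (heatKernel t q.2 0 : ℂ))
      = fun q : ℝ × ℝ =>
        c * ((heatKernel t q.1 νk : ℂ) * (heatKernel t q.2 0 : ℂ)) -
          (χ q.1 : ℂ) * Φj ((q.1 : ℂ) + Complex.I * (q.2 : ℂ)) *
            (heatKernel t q.1 νk : ℂ) * (heatKernel t q.2 0 : ℂ) := by
    funext q; ring
  rw [hsplit, integral_sub t1 t2]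
  congr 1
  · rw [integral_const_mul]
    rw [show (volume : Measure (ℝ × ℝ)) = volume.prod volume from rfl,
      integral_prod_mul (f := fun v : ℝ => (heatKernel t v νk : ℂ))
        (g := fun w : ℝ => (heatKernel t w 0 : ℂ))]
    rw [show (∫ x : ℝ, (heatKernel t x νk : ℂ)) = ((∫ x : ℝ, heatKernel t x νk : ℝ) : ℂ)
        from integral_ofReal,
      show (∫ x : ℝ, (heatKernel t x 0 : ℂ)) = ((∫ x : ℝ, heatKernel t x 0 : ℝ) : ℂ)
        from integral_ofReal,
      integral_heatKernel ht, integral_heatKernel ht]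
    simp
  · rw [show (volume : Measure (ℝ × ℝ)) = volume.prod volume from rfl, integral_prod (_) t2]
    · refine integral_congr_ae (Filter.Eventually.of_forall fun v => ?_)
      show (∫ w : ℝ, (χ v : ℂ) * Φj ((v : ℂ) + Complex.I * (w : ℂ)) *
          (heatKernel t v νk : ℂ) * (heatKernel t w 0 : ℂ)) = _
      have heq : (fun w : ℝ => (χ v : ℂ) * Φj ((v : ℂ) + Complex.I * (w : ℂ)) *
          (heatKernel t v νk : ℂ) * (heatKernel t w 0 : ℂ))
          = fun w : ℝ => ((χ v : ℂ) * (heatKernel t v νk : ℂ)) *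
            ((heatKernel t w 0 : ℂ) * Φj ((v : ℂ) + Complex.I * (w : ℂ))) := by
        funext w; ring
      rw [heq, integral_const_mul]
      simp only [GFun, psiF, mul_assoc]

end Analytic

section Main

variable {N : ℕ} {t : ℝ} (ht : 0 < t)
  (ν : Fin N → ℝ) {χ : ℝ → ℝ} (hχ : Measurable χ) (hχbd : ∃ C : ℝ, ∀ x, |χ x| ≤ C)
  {Φ : Fin N → ℂ → ℂ} (hΦ : ∀ j, Measurable (Φ j))
  (hint : ∀ j k : Fin N,
    Integrable (fun q : ℝ × ℝ =>
      Φ j ((q.1 : ℂ) + Complex.I * (q.2 : ℂ)) *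
        (heatKernel t q.1 (ν k) : ℂ) * (heatKernel t q.2 0 : ℂ)))

include ht hχ hχbd hint in
set_option maxHeartbeats 1000000 in
lemma lhs_term (L : ℕ) :
    (∫ x : Fin L → ℝ,
      (∏ i : Fin L, (χ (x i) : ℂ)) *
        Matrix.det (Matrix.of fun i k : Fin L =>
          ∑ j : Fin N, (heatKernel t (x i) (ν j) : ℂ) *
            ∫ y : ℝ, (heatKernel t y 0 : ℂ) *
              Φ j ((x k : ℂ) + Complex.I * (y : ℂ))))
    = ∑ σ : Equiv.Perm (Fin L), ∑ f : Fin L → Fin N,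
        ((Equiv.Perm.sign σ : ℤ) : ℂ) *
          ∏ i : Fin L, (∫ r : ℝ, GFun t (ν (f (σ⁻¹ i))) χ (Φ (f i)) r) := by
  classical
  have hpt : ∀ x : Fin L → ℝ,
      (∏ i : Fin L, (χ (x i) : ℂ)) *
        Matrix.det (Matrix.of fun i k : Fin L =>
          ∑ j : Fin N, (heatKernel t (x i) (ν j) : ℂ) *
            ∫ y : ℝ, (heatKernel t y 0 : ℂ) *
              Φ j ((x k : ℂ) + Complex.I * (y : ℂ)))
      = ∑ σ : Equiv.Perm (Fin L), ∑ f : Fin L → Fin N,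
          ((Equiv.Perm.sign σ : ℤ) : ℂ) *
            ∏ i : Fin L, GFun t (ν (f (σ⁻¹ i))) χ (Φ (f i)) (x i) := by
    intro x
    rw [Matrix.det_apply', Finset.mul_sum]
    refine Finset.sum_congr rfl fun σ _ => ?_
    have hM : ∀ i : Fin L, (Matrix.of fun i k : Fin L =>
        ∑ j : Fin N, (heatKernel t (x i) (ν j) : ℂ) *
          ∫ y : ℝ, (heatKernel t y 0 : ℂ) *
            Φ j ((x k : ℂ) + Complex.I * (y : ℂ))) (σ i) i
        = ∑ j : Fin N, (heatKernel t (x (σ i)) (ν j) : ℂ) * psiF t (Φ j) (x i) := fun i => rfl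
    simp only [hM]
    rw [Finset.prod_univ_sum]
    rw [Fintype.piFinset_univ, Finset.mul_sum, Finset.mul_sum]
    refine Finset.sum_congr rfl fun f _ => ?_
    rw [Finset.prod_mul_distrib]
    have hre : (∏ i : Fin L, (heatKernel t (x (σ i)) (ν (f i)) : ℂ))
        = ∏ i : Fin L, (heatKernel t (x i) (ν (f (σ⁻¹ i))) : ℂ) := by
      refine Fintype.prod_equiv σ _ _ fun i => ?_
      simp
    rw [hre]
    have : (∏ i : Fin L, (χ (x i) : ℂ)) *
        ((∏ i : Fin L, (heatKernel t (x i) (ν (f (σ⁻¹ i))) : ℂ)) *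
          ∏ i : Fin L, psiF t (Φ (f i)) (x i))
        = ∏ i : Fin L, GFun t (ν (f (σ⁻¹ i))) χ (Φ (f i)) (x i) := by
      rw [← mul_assoc, ← Finset.prod_mul_distrib, ← Finset.prod_mul_distrib]
      rfl
    rw [← this]
    ring
  rw [integral_congr_ae (Filter.Eventually.of_forall hpt)]
  rw [integral_finset_sum _ (fun σ _ => integrable_finset_sum _ (fun f _ =>
    ((Integrable.fintype_prod (fun i =>
      integrable_GFun ht hχ hχbd (hint (f i) (f (σ⁻¹ i))))).const_mul _)))]
  refine Finset.sum_congr rfl fun σ _ => ?_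
  have hI : ∀ f : Fin L → Fin N, Integrable (fun x : Fin L → ℝ => ((Equiv.Perm.sign σ : ℤ) : ℂ) *
      ∏ i : Fin L, GFun t (ν (f (σ⁻¹ i))) χ (Φ (f i)) (x i)) := fun f =>
    ((Integrable.fintype_prod (fun i =>
      integrable_GFun ht hχ hχbd (hint (f i) (f (σ⁻¹ i))))).const_mul _)
  rw [integral_finset_sum _ (fun f _ => hI f)]
  refine Finset.sum_congr rfl fun f _ => ?_
  rw [integral_const_mul, integral_fintype_prod_volume_eq_prod
    (f := fun i r => GFun t (ν (f (σ⁻¹ i))) χ (Φ (f i)) r)]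

set_option maxHeartbeats 1000000 in
include ht hχ hχbd hint in
lemma rhs_eval :
    (∫ v : Fin N → ℝ, ∫ w : Fin N → ℝ,
        Matrix.det (Matrix.of fun j k : Fin N =>
          (if j = k then (1 : ℂ) else 0) -
            Φ j ((v k : ℂ) + Complex.I * (w k : ℂ)) * (χ (v k) : ℂ)) *
          ∏ k : Fin N, (heatKernel t (v k) (ν k) : ℂ) * (heatKernel t (w k) 0 : ℂ))
    = Matrix.det (Matrix.of fun j k : Fin N =>
        (if j = k then (1 : ℂ) else 0) - ∫ r : ℝ, GFun t (ν k) χ (Φ j) r) := by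
  classical
  set F : Fin N → Fin N → ℝ × ℝ → ℂ := fun j k q =>
    ((if j = k then (1 : ℂ) else 0) - Φ j ((q.1 : ℂ) + Complex.I * (q.2 : ℂ)) * (χ q.1 : ℂ)) *
      (heatKernel t q.1 (ν k) : ℂ) * (heatKernel t q.2 0 : ℂ) with hF
  have hFint : ∀ j k, Integrable (F j k) :=
    fun j k => integrable_FFun ht hχ hχbd (hint j k) _
  -- pointwise expansion of the integrand
  have hpt : ∀ p : (Fin N → ℝ) × (Fin N → ℝ),
      Matrix.det (Matrix.of fun j k : Fin N =>
          (if j = k then (1 : ℂ) else 0) -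
            Φ j ((p.1 k : ℂ) + Complex.I * (p.2 k : ℂ)) * (χ (p.1 k) : ℂ)) *
        (∏ k : Fin N, (heatKernel t (p.1 k) (ν k) : ℂ) * (heatKernel t (p.2 k) 0 : ℂ))
      = ∑ σ : Equiv.Perm (Fin N),
          ((Equiv.Perm.sign σ : ℤ) : ℂ) * ∏ k : Fin N, F (σ k) k (p.1 k, p.2 k) := by
    intro p
    rw [Matrix.det_apply', Finset.sum_mul]
    refine Finset.sum_congr rfl fun σ _ => ?_
    rw [mul_assoc, ← Finset.prod_mul_distrib]
    congr 1
    refine Finset.prod_congr rfl fun k _ => ?_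
    simp only [hF, Matrix.of_apply]
    ring
  -- the equivalence with the pi space over ℝ × ℝ
  set e := MeasurableEquiv.arrowProdEquivProdArrow ℝ ℝ (Fin N) with he
  have hmp : MeasurePreserving e (volume : Measure (Fin N → ℝ × ℝ))
      ((volume : Measure (Fin N → ℝ)).prod (volume : Measure (Fin N → ℝ))) :=
    measurePreserving_arrowProdEquivProdArrow ℝ ℝ (Fin N) (fun _ => volume) (fun _ => volume)
  have hGint : ∀ σ : Equiv.Perm (Fin N),
      Integrable (fun q : Fin N → ℝ × ℝ => ∏ k : Fin N, F (σ k) k (q k)) :=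
    fun σ => Integrable.fintype_prod (fun k => hFint (σ k) k)
  have hcomp : ∀ σ : Equiv.Perm (Fin N),
      (fun p : (Fin N → ℝ) × (Fin N → ℝ) => ∏ k : Fin N, F (σ k) k (p.1 k, p.2 k))
      = (fun q : Fin N → ℝ × ℝ => ∏ k : Fin N, F (σ k) k (q k)) ∘ e.symm := fun σ => rfl
  have hIsym : ∀ σ : Equiv.Perm (Fin N),
      Integrable ((fun q : Fin N → ℝ × ℝ => ∏ k : Fin N, F (σ k) k (q k)) ∘ e.symm)
        ((volume : Measure (Fin N → ℝ)).prod (volume : Measure (Fin N → ℝ))) := fun σ =>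
    ((hmp.symm e).integrable_comp_emb (MeasurableEquiv.measurableEmbedding e.symm)).2 (hGint σ)
  have hH : Integrable (fun p : (Fin N → ℝ) × (Fin N → ℝ) =>
      Matrix.det (Matrix.of fun j k : Fin N =>
          (if j = k then (1 : ℂ) else 0) -
            Φ j ((p.1 k : ℂ) + Complex.I * (p.2 k : ℂ)) * (χ (p.1 k) : ℂ)) *
        (∏ k : Fin N, (heatKernel t (p.1 k) (ν k) : ℂ) * (heatKernel t (p.2 k) 0 : ℂ)))
      ((volume : Measure (Fin N → ℝ)).prod (volume : Measure (Fin N → ℝ))) := by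
    refine (integrable_finset_sum _ (fun σ _ => ?_)).congr
      (Filter.Eventually.of_forall fun p => (hpt p).symm)
    exact ((hIsym σ).congr (Filter.Eventually.of_forall fun p => rfl)).const_mul _
  rw [MeasureTheory.integral_integral hH]
  rw [integral_congr_ae (Filter.Eventually.of_forall hpt)]
  have hsum := integral_finset_sum (μ := (volume : Measure (Fin N → ℝ)).prod volume)
    (univ : Finset (Equiv.Perm (Fin N)))
    (f := fun (σ : Equiv.Perm (Fin N)) (p : (Fin N → ℝ) × (Fin N → ℝ)) =>
      ((Equiv.Perm.sign σ : ℤ) : ℂ) * ∏ k : Fin N, F (σ k) k (p.1 k, p.2 k))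
    (fun σ _ => ((hIsym σ).const_mul _))
  rw [hsum]
  have hterm : ∀ σ : Equiv.Perm (Fin N),
      (∫ p : (Fin N → ℝ) × (Fin N → ℝ),
        ((Equiv.Perm.sign σ : ℤ) : ℂ) * ∏ k : Fin N, F (σ k) k (p.1 k, p.2 k)
        ∂((volume : Measure (Fin N → ℝ)).prod (volume : Measure (Fin N → ℝ))))
      = ((Equiv.Perm.sign σ : ℤ) : ℂ) *
          ∏ k : Fin N, ((if σ k = k then (1 : ℂ) else 0) - ∫ r : ℝ, GFun t (ν k) χ (Φ (σ k)) r) := by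
    intro σ
    rw [integral_const_mul]
    congr 1
    rw [hcomp σ, Function.comp_def,
      (hmp.symm e).integral_comp' (fun q : Fin N → ℝ × ℝ => ∏ k : Fin N, F (σ k) k (q k))]
    rw [integral_fintype_prod_volume_eq_prod (f := fun k q => F (σ k) k q)]
    exact Finset.prod_congr rfl fun k _ => integral_FFun ht hχ hχbd (hint (σ k) k) _
  rw [Finset.sum_congr rfl (fun σ _ => hterm σ)]
  rw [Matrix.det_apply']
  rfl


end Main

/-- Complex-Brownian-motion representation: the terminating Fredholm expansion of the
kernel `K(x,x') = Σ_j p(t,x|ν_j) ∫ p(t,y|0) Φ_j(x'+iy) dy` equals the expectation,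
over independent complex Gaussian variables `v_k + i w_k` centered at `ν_k`, of the
`N × N` determinant `det[δ_{jk} − Φ_j(v_k + i w_k) χ(v_k)]`. -/
theorem cbm_representation (N : ℕ) (hN : 1 ≤ N) (t : ℝ) (ht : 0 < t)
    (ν : Fin N → ℝ) (χ : ℝ → ℝ) (hχ : Measurable χ) (hχbd : ∃ C : ℝ, ∀ x, |χ x| ≤ C)
    (Φ : Fin N → ℂ → ℂ) (hΦ : ∀ j, Measurable (Φ j))
    (hint : ∀ j k : Fin N,
      Integrable (fun q : ℝ × ℝ =>
        Φ j ((q.1 : ℂ) + Complex.I * (q.2 : ℂ)) *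
          (heatKernel t q.1 (ν k) : ℂ) * (heatKernel t q.2 0 : ℂ))) :
    ∑ L ∈ Finset.range (N + 1),
        ((-1 : ℂ) ^ L / (Nat.factorial L : ℂ)) *
          ∫ x : Fin L → ℝ,
            (∏ i : Fin L, (χ (x i) : ℂ)) *
              Matrix.det (Matrix.of fun i k : Fin L =>
                ∑ j : Fin N, (heatKernel t (x i) (ν j) : ℂ) *
                  ∫ y : ℝ, (heatKernel t y 0 : ℂ) *
                    Φ j ((x k : ℂ) + Complex.I * (y : ℂ))) =
      ∫ v : Fin N → ℝ, ∫ w : Fin N → ℝ,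
        Matrix.det (Matrix.of fun j k : Fin N =>
          (if j = k then (1 : ℂ) else 0) -
            Φ j ((v k : ℂ) + Complex.I * (w k : ℂ)) * (χ (v k) : ℂ)) *
          ∏ k : Fin N, (heatKernel t (v k) (ν k) : ℂ) * (heatKernel t (w k) 0 : ℂ) := by
  classical
  set B : Matrix (Fin N) (Fin N) ℂ :=
    Matrix.of (fun j k : Fin N => ∫ r : ℝ, GFun t (ν k) χ (Φ j) r) with hB
  calc ∑ L ∈ Finset.range (N + 1),
        ((-1 : ℂ) ^ L / (Nat.factorial L : ℂ)) *
          ∫ x : Fin L → ℝ,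
            (∏ i : Fin L, (χ (x i) : ℂ)) *
              Matrix.det (Matrix.of fun i k : Fin L =>
                ∑ j : Fin N, (heatKernel t (x i) (ν j) : ℂ) *
                  ∫ y : ℝ, (heatKernel t y 0 : ℂ) *
                    Φ j ((x k : ℂ) + Complex.I * (y : ℂ)))
      = ∑ L ∈ Finset.range (N + 1), ((-1 : ℂ) ^ L / (Nat.factorial L : ℂ)) *
          (∑ σ : Equiv.Perm (Fin L), ∑ f : Fin L → Fin N,
            ((Equiv.Perm.sign σ : ℤ) : ℂ) * ∏ i : Fin L, B (f i) (f (σ⁻¹ i))) := by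
        refine Finset.sum_congr rfl fun L _ => ?_
        rw [lhs_term ht ν hχ hχbd hint L]
        rfl
    _ = (1 - B).det := fredholm_alg N B
    _ = Matrix.det (Matrix.of fun j k : Fin N =>
          (if j = k then (1 : ℂ) else 0) - ∫ r : ℝ, GFun t (ν k) χ (Φ j) r) := by
        congr 1
        try ext j k
        try simp [hB, Matrix.one_apply]
    _ = ∫ v : Fin N → ℝ, ∫ w : Fin N → ℝ,
        Matrix.det (Matrix.of fun j k : Fin N =>
          (if j = k then (1 : ℂ) else 0) -
            Φ j ((v k : ℂ) + Complex.I * (w k : ℂ)) * (χ (v k) : ℂ)) *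
          ∏ k : Fin N, (heatKernel t (v k) (ν k) : ℂ) * (heatKernel t (w k) 0 : ℂ) :=
        (rhs_eval ht ν hχ hχbd hint).symm
end

section
/- Let N ≥ 1, let c₁, …, c_N be real numbers, and let a₁, …, a_{N−1} be real numbers. For 1 ≤ j, ℓ ≤ N define the complex number M_{jℓ} = ∫_ℝ (2π)^{−1/2} · exp(−(u + i c_j)²/2) · ∏_{m=1}^{ℓ−1} (i u − i a_m) du (with the empty product equal to 1 for ℓ = 1). Then det_{1 ≤ j,ℓ ≤ N}[M_{jℓ}] = ∏_{1 ≤ j < ℓ ≤ N} (c_ℓ − c_j). (Each entry is a multiple Hermite polynomial of type II, a monic polynomial of degree ℓ−1 in c_j, so the determinant collapses to a Vandermonde determinant.) -/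
open Finset MeasureTheory

namespace DetMH

open Filter Complex Polynomial

noncomputable def gmu : ℕ → ℂ
  | 0 => ((Real.sqrt (2 * Real.pi) : ℝ) : ℂ)
  | 1 => 0
  | (k+2) => (k+1) * gmu k

lemma tendsto_pow_exp (j : ℕ) {b : ℝ} (hb : 0 < b) :
    Tendsto (fun u : ℝ => u ^ j * Real.exp (-b * u ^ 2)) atTop (nhds 0) := by
  have hbu : Tendsto (fun u : ℝ => b * u ^ 2) atTop atTop :=
    (tendsto_pow_atTop two_ne_zero).const_mul_atTop hb
  have h := (Real.tendsto_pow_mul_exp_neg_atTop_nhds_zero j).comp hbu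
  refine squeeze_zero' ?_ ?_ h
  · filter_upwards [eventually_ge_atTop (0:ℝ)] with u hu
    positivity
  · filter_upwards [eventually_ge_atTop (max 1 b⁻¹)] with u hu
    have hu1 : (1:ℝ) ≤ u := le_trans (le_max_left _ _) hu
    have hub : b⁻¹ ≤ u := le_trans (le_max_right _ _) hu
    have hu0 : (0:ℝ) ≤ u := le_trans zero_le_one hu1
    have h1 : u ≤ b * u ^ 2 := by
      nlinarith [mul_le_mul_of_nonneg_left hub hb.le, mul_inv_cancel₀ hb.ne']
    simp only [Function.comp_apply, neg_mul]
    exact mul_le_mul_of_nonneg_right (pow_le_pow_left₀ hu0 h1 j) (Real.exp_pos _).le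

lemma tendsto_abs_top (k : ℕ) (d : ℝ) {b : ℝ} (hb : 0 < b) :
    Tendsto (fun u : ℝ => (|u| + d) ^ k * Real.exp (-b * u ^ 2)) atTop (nhds 0) := by
  have key : ∀ u : ℝ, (|u| + d) ^ k * Real.exp (-b * u ^ 2)
      = ∑ i ∈ range (k+1), (|u| ^ i * Real.exp (-b * u ^ 2)) * (d ^ (k-i) * (k.choose i)) := by
    intro u
    rw [add_pow, Finset.sum_mul]
    refine Finset.sum_congr rfl fun i _ => by ring
  simp_rw [key]
  have : Tendsto (fun u : ℝ => ∑ i ∈ range (k+1),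
      (|u| ^ i * Real.exp (-b * u ^ 2)) * (d ^ (k-i) * (k.choose i))) atTop
      (nhds (∑ i ∈ range (k+1), (0:ℝ) * (d ^ (k-i) * (k.choose i)))) := by
    refine tendsto_finset_sum _ fun i _ => Tendsto.mul_const _ ?_
    refine ((tendsto_pow_exp i hb).congr' ?_)
    filter_upwards [eventually_ge_atTop (0:ℝ)] with u hu
    rw [_root_.abs_of_nonneg hu]
  simpa using this

lemma tendsto_abs_bot (k : ℕ) (d : ℝ) {b : ℝ} (hb : 0 < b) :
    Tendsto (fun u : ℝ => (|u| + d) ^ k * Real.exp (-b * u ^ 2)) atBot (nhds 0) := by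
  have h := (tendsto_abs_top k d hb).comp tendsto_neg_atBot_atTop
  refine h.congr fun u => ?_
  simp [Function.comp, abs_neg, neg_sq]

lemma norm_f (c : ℝ) (m : ℕ) (u : ℝ) :
    ‖((u:ℂ) + Complex.I * c) ^ m * Complex.exp (-((u:ℂ) + Complex.I * c) ^ 2 / 2)‖
      = ‖(u:ℂ) + Complex.I * c‖ ^ m * Real.exp ((c ^ 2 - u ^ 2) / 2) := by
  rw [norm_mul, norm_pow]
  congr 1
  rw [Complex.norm_exp]
  congr 1
  have hz : (-((u:ℂ) + Complex.I * c) ^ 2 / 2) = (((c ^ 2 - u ^ 2) / 2 : ℝ) : ℂ)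
      + ((-(u * c) : ℝ) : ℂ) * Complex.I := by
    push_cast
    linear_combination (-(c:ℂ) ^ 2 / 2) * Complex.I_sq
  rw [hz]
  simp [← Complex.ofReal_pow]

lemma norm_f_le (c : ℝ) (m : ℕ) (u : ℝ) :
    ‖((u:ℂ) + Complex.I * c) ^ m * Complex.exp (-((u:ℂ) + Complex.I * c) ^ 2 / 2)‖
      ≤ (((|u| + |c|) ^ m * Real.exp (-(4:ℝ)⁻¹ * u ^ 2)) * Real.exp (c ^ 2 / 2))
        * Real.exp (-(4:ℝ)⁻¹ * u ^ 2) := by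
  rw [norm_f]
  have h1 : ‖(u:ℂ) + Complex.I * c‖ ≤ |u| + |c| := by
    refine (norm_add_le _ _).trans ?_
    simp
  have h2 : Real.exp ((c ^ 2 - u ^ 2) / 2)
      = Real.exp (-(4:ℝ)⁻¹ * u ^ 2) * Real.exp (c ^ 2 / 2) * Real.exp (-(4:ℝ)⁻¹ * u ^ 2) := by
    rw [← Real.exp_add, ← Real.exp_add]; ring_nf
  rw [h2]
  have h3 : ‖(u:ℂ) + Complex.I * c‖ ^ m ≤ (|u| + |c|) ^ m :=
    pow_le_pow_left₀ (norm_nonneg _) h1 m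
  have := mul_le_mul_of_nonneg_right h3 (by positivity :
    (0:ℝ) ≤ Real.exp (-(4:ℝ)⁻¹ * u ^ 2) * Real.exp (c ^ 2 / 2) * Real.exp (-(4:ℝ)⁻¹ * u ^ 2))
  calc _ ≤ _ := this
  _ = _ := by ring

lemma integrable_f (c : ℝ) (m : ℕ) :
    Integrable (fun u : ℝ => ((u:ℂ) + Complex.I * c) ^ m
      * Complex.exp (-((u:ℂ) + Complex.I * c) ^ 2 / 2)) := by
  have hcont : Continuous fun u : ℝ => ((u:ℂ) + Complex.I * c) ^ m
      * Complex.exp (-((u:ℂ) + Complex.I * c) ^ 2 / 2) := by fun_prop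
  have hg : Integrable (fun u : ℝ => Real.exp (-(4:ℝ)⁻¹ * u ^ 2)) :=
    integrable_exp_neg_mul_sq (by norm_num)
  have hKtop : Tendsto (fun u : ℝ => ((|u| + |c|) ^ m * Real.exp (-(4:ℝ)⁻¹ * u ^ 2))
      * Real.exp (c ^ 2 / 2)) atTop (nhds 0) := by
    simpa using (tendsto_abs_top m |c| (by norm_num : (0:ℝ) < 4⁻¹)).mul_const
      (Real.exp (c ^ 2 / 2))
  have hKbot : Tendsto (fun u : ℝ => ((|u| + |c|) ^ m * Real.exp (-(4:ℝ)⁻¹ * u ^ 2))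
      * Real.exp (c ^ 2 / 2)) atBot (nhds 0) := by
    simpa using (tendsto_abs_bot m |c| (by norm_num : (0:ℝ) < 4⁻¹)).mul_const
      (Real.exp (c ^ 2 / 2))
  have hO : ∀ l : Filter ℝ, Tendsto (fun u : ℝ => ((|u| + |c|) ^ m
        * Real.exp (-(4:ℝ)⁻¹ * u ^ 2)) * Real.exp (c ^ 2 / 2)) l (nhds 0) →
      (fun u : ℝ => ((u:ℂ) + Complex.I * c) ^ m
        * Complex.exp (-((u:ℂ) + Complex.I * c) ^ 2 / 2))
        =O[l] fun u : ℝ => Real.exp (-(4:ℝ)⁻¹ * u ^ 2) := by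
    intro l hl
    rw [Asymptotics.isBigO_iff]
    refine ⟨1, ?_⟩
    filter_upwards [hl.eventually_le_const (by norm_num : (0:ℝ) < 1)] with u hu
    rw [Real.norm_eq_abs, abs_of_pos (Real.exp_pos _), one_mul]
    calc ‖_‖ ≤ _ := norm_f_le c m u
    _ ≤ 1 * Real.exp (-(4:ℝ)⁻¹ * u ^ 2) :=
        mul_le_mul_of_nonneg_right hu (Real.exp_pos _).le
    _ = _ := one_mul _
  exact (hcont.locallyIntegrable).integrable_of_isBigO_atBot_atTop
    (hO _ hKbot) (hg.integrableAtFilter _) (hO _ hKtop) (hg.integrableAtFilter _)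

lemma hasDerivAt_fC (c : ℝ) (m : ℕ) (w : ℂ) :
    HasDerivAt (fun w : ℂ => (w + Complex.I * c) ^ (m+1)
        * Complex.exp (-(w + Complex.I * c) ^ 2 / 2))
      ((m+1 : ℂ) * ((w + Complex.I * c) ^ m
          * Complex.exp (-(w + Complex.I * c) ^ 2 / 2))
        - (w + Complex.I * c) ^ (m+2)
          * Complex.exp (-(w + Complex.I * c) ^ 2 / 2)) w := by
  have hz : HasDerivAt (fun w : ℂ => w + Complex.I * c) 1 w :=
    (hasDerivAt_id w).add_const _
  have h1 := hz.pow (m+1)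
  have h2 := (((hz.pow 2).neg).div_const 2).cexp
  have := h1.mul h2
  refine this.congr_deriv ?_
  simp only [Pi.pow_apply, Pi.neg_apply]
  push_cast
  ring

lemma hasDerivAt_f (c : ℝ) (m : ℕ) (u : ℝ) :
    HasDerivAt (fun u : ℝ => ((u:ℂ) + Complex.I * c) ^ (m+1)
        * Complex.exp (-((u:ℂ) + Complex.I * c) ^ 2 / 2))
      ((m+1 : ℂ) * (((u:ℂ) + Complex.I * c) ^ m
          * Complex.exp (-((u:ℂ) + Complex.I * c) ^ 2 / 2))
        - ((u:ℂ) + Complex.I * c) ^ (m+2)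
          * Complex.exp (-((u:ℂ) + Complex.I * c) ^ 2 / 2)) u :=
  (hasDerivAt_fC c m u).comp_ofReal

lemma hasDerivAt_e (c : ℝ) (u : ℝ) :
    HasDerivAt (fun u : ℝ => Complex.exp (-((u:ℂ) + Complex.I * c) ^ 2 / 2))
      (-((((u:ℂ) + Complex.I * c) ^ 1)
        * Complex.exp (-((u:ℂ) + Complex.I * c) ^ 2 / 2))) u := by
  have hz : HasDerivAt (fun w : ℂ => w + Complex.I * c) 1 (u:ℂ) :=
    (hasDerivAt_id _).add_const _
  have h2 := ((((hz.pow 2).neg).div_const 2).cexp).comp_ofReal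
  simp only [Pi.pow_apply, Pi.neg_apply] at h2
  convert h2 using 1
  push_cast
  ring

lemma moment (c : ℝ) : ∀ m : ℕ,
    (∫ u : ℝ, ((u:ℂ) + Complex.I * c) ^ m
      * Complex.exp (-((u:ℂ) + Complex.I * c) ^ 2 / 2)) = gmu m
  | 0 => by
      have h := GaussianFourier.integral_cexp_neg_mul_sq_add_real_mul_I
        (b := (1/2 : ℂ)) (by norm_num) c
      have heq : ∀ x : ℝ, Complex.exp (-(1/2 : ℂ) * ((x:ℂ) + (c:ℂ) * Complex.I) ^ 2)
          = ((x:ℂ) + Complex.I * c) ^ 0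
            * Complex.exp (-((x:ℂ) + Complex.I * c) ^ 2 / 2) := by
        intro x; rw [pow_zero, one_mul]; ring_nf
      rw [show (↑Real.pi / (1/2 : ℂ)) = ((2 * Real.pi : ℝ) : ℂ) by push_cast; ring] at h
      simp_rw [heq] at h
      rw [h, gmu]
      rw [Real.sqrt_eq_rpow, show ((1:ℂ)/2) = ((1/2 : ℝ) : ℂ) by norm_num,
        ← Complex.ofReal_cpow (by positivity)]
  | 1 => by
      have hd : ∀ u : ℝ, HasDerivAt (fun u : ℝ =>
          Complex.exp (-((u:ℂ) + Complex.I * c) ^ 2 / 2))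
          (-(((u:ℂ) + Complex.I * c) ^ 1
            * Complex.exp (-((u:ℂ) + Complex.I * c) ^ 2 / 2))) u :=
        fun u => hasDerivAt_e c u
      have hint : Integrable (fun u : ℝ =>
          Complex.exp (-((u:ℂ) + Complex.I * c) ^ 2 / 2)) := by
        simpa using integrable_f c 0
      have h := integral_eq_zero_of_hasDerivAt_of_integrable hd
        ((integrable_f c 1).neg) hint
      rw [integral_neg, neg_eq_zero] at h
      rw [h, gmu]
  | (m+2) => by
      have h := integral_eq_zero_of_hasDerivAt_of_integrable (hasDerivAt_f c m)
        (((integrable_f c m).const_mul _).sub (integrable_f c (m+2)))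
        (integrable_f c (m+1))
      rw [integral_sub ((integrable_f c m).const_mul _) (integrable_f c (m+2)),
        integral_const_mul, moment c m, sub_eq_zero] at h
      rw [← h, gmu]

noncomputable def hermP (a : ℕ → ℝ) (l : ℕ) : Polynomial ℂ :=
  C (((Real.sqrt (2 * Real.pi) : ℝ) : ℂ))⁻¹ *
    ∑ t ∈ (range l).powerset, C (Complex.I ^ t.card * gmu t.card) *
      ∏ m ∈ range l \ t, (X - C (Complex.I * (a m : ℂ)))

lemma sqrt2pi_ne : (((Real.sqrt (2 * Real.pi) : ℝ) : ℂ)) ≠ 0 := by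
  rw [Complex.ofReal_ne_zero]
  positivity

lemma hermP_eq (a : ℕ → ℝ) (l : ℕ) :
    hermP a l = (∏ m ∈ range l, (X - C (Complex.I * (a m : ℂ))))
      + C (((Real.sqrt (2 * Real.pi) : ℝ) : ℂ))⁻¹ *
        ∑ t ∈ ((range l).powerset.erase ∅), C (Complex.I ^ t.card * gmu t.card) *
          ∏ m ∈ range l \ t, (X - C (Complex.I * (a m : ℂ))) := by
  rw [hermP, ← Finset.add_sum_erase _ _ (Finset.empty_mem_powerset (range l)), mul_add]
  congr 1
  simp only [card_empty, pow_zero, one_mul, sdiff_empty, ← mul_assoc, ← C_mul]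
  rw [show gmu 0 = ((Real.sqrt (2 * Real.pi) : ℝ) : ℂ) from rfl,
    inv_mul_cancel₀ sqrt2pi_ne, C_1, one_mul]

lemma prodA_monic (a : ℕ → ℝ) (l : ℕ) :
    (∏ m ∈ range l, (X - C (Complex.I * (a m : ℂ)))).Monic :=
  monic_prod_of_monic _ _ fun m _ => monic_X_sub_C _

lemma prodA_natDegree (a : ℕ → ℝ) (l : ℕ) :
    (∏ m ∈ range l, (X - C (Complex.I * (a m : ℂ)))).natDegree = l := by
  rw [natDegree_prod_of_monic _ _ fun m _ => monic_X_sub_C _]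
  simp only [natDegree_X_sub_C, Finset.sum_const, smul_eq_mul, mul_one, Finset.card_range]

lemma hermP_B_degree_lt (a : ℕ → ℝ) (l : ℕ) :
    (C (((Real.sqrt (2 * Real.pi) : ℝ) : ℂ))⁻¹ *
        ∑ t ∈ ((range l).powerset.erase ∅), C (Complex.I ^ t.card * gmu t.card) *
          ∏ m ∈ range l \ t, (X - C (Complex.I * (a m : ℂ)))).degree < (l : ℕ) := by
  refine lt_of_le_of_lt (degree_mul_le _ _) ?_
  have h1 : (C (((Real.sqrt (2 * Real.pi) : ℝ) : ℂ))⁻¹).degree ≤ 0 := degree_C_le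
  have h2 : (∑ t ∈ ((range l).powerset.erase ∅), C (Complex.I ^ t.card * gmu t.card) *
      ∏ m ∈ range l \ t, (X - C (Complex.I * (a m : ℂ)))).degree < (l : ℕ) := by
    refine lt_of_le_of_lt (degree_sum_le _ _) ?_
    rw [Finset.sup_lt_iff (by exact_mod_cast WithBot.bot_lt_coe (l : ℕ))]
    intro t ht
    rw [Finset.mem_erase, Finset.mem_powerset] at ht
    obtain ⟨hne, hsub⟩ := ht
    have hcard : 1 ≤ t.card := Finset.card_pos.mpr (Finset.nonempty_iff_ne_empty.mpr hne)
    have hcard2 : t.card ≤ l := by simpa using Finset.card_le_card hsub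
    refine lt_of_le_of_lt (degree_mul_le _ _) ?_
    have hd1 : (C (Complex.I ^ t.card * gmu t.card)).degree ≤ 0 := degree_C_le
    have hd2 : (∏ m ∈ range l \ t, (X - C (Complex.I * (a m : ℂ)))).degree
        ≤ ((l - t.card : ℕ) : WithBot ℕ) := by
      refine le_trans (degree_le_natDegree) ?_
      rw [natDegree_prod_of_monic _ _ fun m _ => monic_X_sub_C _]
      simp only [natDegree_X_sub_C, Finset.sum_const, smul_eq_mul, mul_one]
      rw [Finset.card_sdiff_of_subset (by simpa using hsub)]
      simp
    calc (C (Complex.I ^ t.card * gmu t.card)).degree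
          + (∏ m ∈ range l \ t, (X - C (Complex.I * (a m : ℂ)))).degree
        ≤ 0 + ((l - t.card : ℕ) : WithBot ℕ) := add_le_add hd1 hd2
      _ = ((l - t.card : ℕ) : WithBot ℕ) := zero_add _
      _ < (l : ℕ) := by
          exact_mod_cast Nat.sub_lt_of_pos_le hcard hcard2
  calc _ ≤ 0 + (∑ t ∈ ((range l).powerset.erase ∅), C (Complex.I ^ t.card * gmu t.card) *
      ∏ m ∈ range l \ t, (X - C (Complex.I * (a m : ℂ)))).degree := by
        exact add_le_add h1 le_rfl
    _ = _ := zero_add _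
    _ < _ := h2

lemma prodA_degree (a : ℕ → ℝ) (l : ℕ) :
    (∏ m ∈ range l, (X - C (Complex.I * (a m : ℂ)))).degree = (l : WithBot ℕ) := by
  rw [degree_eq_natDegree (prodA_monic a l).ne_zero, prodA_natDegree]

lemma hermP_monic (a : ℕ → ℝ) (l : ℕ) : (hermP a l).Monic := by
  rw [hermP_eq]
  refine (prodA_monic a l).add_of_left ?_
  rw [prodA_degree]
  exact hermP_B_degree_lt a l

lemma hermP_degree (a : ℕ → ℝ) (l : ℕ) : (hermP a l).degree = (l : WithBot ℕ) := by
  rw [hermP_eq, degree_add_eq_left_of_degree_lt, prodA_degree]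
  rw [prodA_degree]
  exact hermP_B_degree_lt a l

lemma hermP_natDegree (a : ℕ → ℝ) (l : ℕ) : (hermP a l).natDegree = l :=
  natDegree_eq_of_degree_eq_some (hermP_degree a l)

lemma entry_eq (cj : ℝ) (a : ℕ → ℝ) (l : ℕ) :
    (∫ u : ℝ,
        ((Real.sqrt (2 * Real.pi))⁻¹ : ℂ) *
          Complex.exp (-((u : ℂ) + Complex.I * (cj : ℂ)) ^ 2 / 2) *
          ∏ m ∈ Finset.range l, (Complex.I * (u : ℂ) - Complex.I * (a m : ℂ)))
      = (hermP a l).eval (cj : ℂ) := by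
  have hexpand : ∀ u : ℝ,
      ((Real.sqrt (2 * Real.pi))⁻¹ : ℂ) *
          Complex.exp (-((u : ℂ) + Complex.I * (cj : ℂ)) ^ 2 / 2) *
          ∏ m ∈ Finset.range l, (Complex.I * (u : ℂ) - Complex.I * (a m : ℂ))
        = ∑ t ∈ (range l).powerset,
            (((Real.sqrt (2 * Real.pi) : ℝ) : ℂ)⁻¹ * Complex.I ^ t.card *
              ∏ m ∈ range l \ t, ((cj : ℂ) - Complex.I * (a m : ℂ))) *
            (((u:ℂ) + Complex.I * cj) ^ t.card
              * Complex.exp (-((u:ℂ) + Complex.I * cj) ^ 2 / 2)) := by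
    intro u
    rw [show (∏ m ∈ Finset.range l, (Complex.I * (u : ℂ) - Complex.I * (a m : ℂ)))
        = ∏ m ∈ range l, (Complex.I * ((u:ℂ) + Complex.I * cj)
            + ((cj : ℂ) - Complex.I * (a m : ℂ)))
        from Finset.prod_congr rfl fun m _ => by
          linear_combination (-(cj:ℂ)) * Complex.I_mul_I,
      Finset.prod_add, Finset.mul_sum]
    refine Finset.sum_congr rfl fun t ht => ?_
    rw [Finset.prod_const, mul_pow]
    ring
  simp_rw [hexpand]
  rw [integral_finset_sum _ fun t _ => (integrable_f cj t.card).const_mul _]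
  simp_rw [integral_const_mul, moment]
  rw [hermP, eval_mul, eval_C, eval_finset_sum, Finset.mul_sum]
  refine Finset.sum_congr rfl fun t ht => ?_
  simp only [eval_mul, eval_C, eval_prod, eval_sub, eval_X]
  ring

lemma prod_pairs {β : Type*} [CommMonoid β] {n : ℕ} (f : Fin n → Fin n → β) :
    ∏ i : Fin n, ∏ j ∈ Finset.Ioi i, f i j
      = ∏ p ∈ Finset.univ.filter (fun p : Fin n × Fin n => p.1 < p.2), f p.1 p.2 := by
  rw [Finset.prod_sigma']
  refine Finset.prod_nbij' (fun x => (x.1, x.2)) (fun p => ⟨p.1, p.2⟩) ?_ ?_ ?_ ?_ ?_ <;>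
    simp [Finset.mem_sigma, Finset.mem_filter]

end DetMH

/-- The determinant of multiple Hermite polynomials of type II collapses to a
Vandermonde determinant: with
`M_{jℓ} = ∫ (2π)^{−1/2} e^{−(u+ic_j)²/2} ∏_{m=1}^{ℓ−1}(iu − ia_m) du`,
one has `det M = ∏_{j<ℓ}(c_ℓ − c_j)`.  (Here `a 0, …, a (N−2)` play the role of
the real numbers `a₁, …, a_{N−1}`; only these values enter the formula.) -/
theorem det_multiple_hermite_eq_vandermonde (N : ℕ) (hN : 1 ≤ N)
    (c : Fin N → ℝ) (a : ℕ → ℝ) :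
    Matrix.det (Matrix.of fun j l : Fin N =>
      ∫ u : ℝ,
        ((Real.sqrt (2 * Real.pi))⁻¹ : ℂ) *
          Complex.exp (-((u : ℂ) + Complex.I * (c j : ℂ)) ^ 2 / 2) *
          ∏ m ∈ Finset.range (l : ℕ), (Complex.I * (u : ℂ) - Complex.I * (a m : ℂ))) =
      ∏ p ∈ Finset.univ.filter (fun p : Fin N × Fin N => p.1 < p.2),
        ((c p.2 : ℂ) - (c p.1 : ℂ)) := by
  have hM : (Matrix.of fun j l : Fin N =>
      ∫ u : ℝ,
        ((Real.sqrt (2 * Real.pi))⁻¹ : ℂ) *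
          Complex.exp (-((u : ℂ) + Complex.I * (c j : ℂ)) ^ 2 / 2) *
          ∏ m ∈ Finset.range (l : ℕ), (Complex.I * (u : ℂ) - Complex.I * (a m : ℂ)))
      = Matrix.of fun j l : Fin N => (DetMH.hermP a (l : ℕ)).eval ((c j : ℝ) : ℂ) := by
    ext j l
    simp only [Matrix.of_apply]
    exact DetMH.entry_eq (c j) a (l : ℕ)
  rw [hM, ← Matrix.det_eval_matrixOfPolynomials_eq_det_vandermonde
      (fun j => ((c j : ℝ) : ℂ)) (fun l => DetMH.hermP a (l : ℕ))
      (fun l => DetMH.hermP_natDegree a (l : ℕ)) (fun l => DetMH.hermP_monic a (l : ℕ)),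
    Matrix.det_vandermonde]
  exact DetMH.prod_pairs _
end

section
/- Let t > 0, N ≥ 1, let y = (y₁,…,y_N) ∈ ℝ^N with y₁ < y₂ < ⋯ < y_N, and let ξ = (ξ₁,…,ξ_N) ∈ ℝ^N with ξ₁ < ξ₂ < ⋯ < ξ_N. Then the limit as ε → 0⁺ of (h_N(y)/h_N(εξ)) · det_{1 ≤ j,k ≤ N}[p(t, y_j | ε ξ_k)] equals t^{−N²/2} · (2π)^{−N/2} · (∏_{j=1}^N (j−1)!)^{−1} · exp(−|y|²/(2t)) · (h_N(y))². (The noncolliding Brownian motion started at the origin has the eigenvalue distribution of the Gaussian unitary ensemble with variance t as its single-time distribution.) -/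
open Filter Topology Finset

/-- Vandermonde product `h_N(v) = ∏_{j<ℓ}(v_ℓ − v_j)`. -/
def vdm {N : ℕ} (v : Fin N → ℝ) : ℝ :=
  ∏ p ∈ Finset.univ.filter (fun p : Fin N × Fin N => p.1 < p.2), (v p.2 - v p.1)

section Aux
open Matrix

def pairsCard (N : ℕ) : ℕ := (Finset.univ.filter (fun p : Fin N × Fin N => p.1 < p.2)).card

noncomputable def rem (N : ℕ) (x : ℝ) : ℝ :=
  Real.exp x - ∑ i ∈ Finset.range N, x ^ i / (Nat.factorial i : ℝ)

noncomputable def uRow (N : ℕ) (b c : Fin N → ℝ) (ε : ℝ) (k : Fin N) (m : Fin (N+1))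
    (j : Fin N) : ℝ :=
  if (m : ℕ) < N then b j ^ (m:ℕ) * (ε * c k) ^ (m:ℕ) / (((m:ℕ).factorial : ℝ))
  else rem N (b j * (ε * c k))

lemma vdm_eq_prod {N : ℕ} (v : Fin N → ℝ) :
    vdm v = ∏ i : Fin N, ∏ j ∈ Finset.Ioi i, (v j - v i) := by
  rw [vdm, Finset.prod_sigma']
  refine Finset.prod_nbij' (fun p => ⟨p.1, p.2⟩) (fun x => (x.1, x.2)) ?_ ?_ ?_ ?_ ?_ <;>
    simp [Finset.mem_sigma, Finset.mem_Ioi]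

lemma two_mul_pairs_card (N : ℕ) :
    2 * pairsCard N = N * N - N := by
  classical
  rw [pairsCard]
  have hswap : (Finset.univ.filter (fun p : Fin N × Fin N => p.2 < p.1)).card
      = (Finset.univ.filter (fun p : Fin N × Fin N => p.1 < p.2)).card := by
    refine Finset.card_nbij' (fun p => (p.2, p.1)) (fun p => (p.2, p.1)) ?_ ?_ ?_ ?_ <;> intro p <;> simp
  have hdiag : (Finset.univ.filter (fun p : Fin N × Fin N => p.1 = p.2)).card = N := by
    rw [show (Finset.univ.filter (fun p : Fin N × Fin N => p.1 = p.2))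
        = Finset.univ.image (fun i : Fin N => (i, i)) by
      ext p; simp only [Finset.mem_filter, Finset.mem_image, Finset.mem_univ, true_and]
      constructor
      · rintro h; exact ⟨p.1, by rw [Prod.ext_iff]; exact ⟨rfl, h⟩⟩
      · rintro ⟨a, h⟩; rw [← h]]
    rw [Finset.card_image_of_injective _ (fun a b h => ((Prod.ext_iff.1 h)).1)]
    simp
  have htot := Finset.card_filter_add_card_filter_not
    (s := (Finset.univ : Finset (Fin N × Fin N))) (p := fun p => p.1 < p.2)
  have hsplit : (Finset.univ.filter (fun p : Fin N × Fin N => ¬ p.1 < p.2)).card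
      = (Finset.univ.filter (fun p : Fin N × Fin N => p.2 < p.1)).card
        + (Finset.univ.filter (fun p : Fin N × Fin N => p.1 = p.2)).card := by
    rw [← Finset.card_union_of_disjoint]
    · congr 1
      ext p
      simp only [Finset.mem_filter, Finset.mem_union, Finset.mem_univ, true_and, not_lt]
      constructor
      · intro h; rcases lt_or_eq_of_le h with h' | h'
        · exact Or.inl h'
        · exact Or.inr h'.symm
      · rintro (h | h)
        · exact le_of_lt h
        · exact le_of_eq h.symm
    · rw [Finset.disjoint_filter]
      intro p _ h h'
      rw [h'] at h
      exact lt_irrefl _ h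
  have hcard : (Finset.univ : Finset (Fin N × Fin N)).card = N * N := by simp
  omega

lemma det_row_sum {n m : ℕ} (v : Fin n → Fin m → Fin n → ℝ) :
    Matrix.det (Matrix.of fun k j => ∑ i : Fin m, v k i j)
      = ∑ g : Fin n → Fin m, Matrix.det (Matrix.of fun k j => v k (g k) j) := by
  have h := MultilinearMap.map_sum (f := (Matrix.detRowAlternating :
      (Fin n → ℝ) [⋀^Fin n]→ₗ[ℝ] ℝ).toMultilinearMap) (g := fun k (i : Fin m) => v k i)
  have e1 : (fun k => ∑ i : Fin m, v k i) = (Matrix.of fun k j => ∑ i : Fin m, v k i j) := by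
    funext k j
    simp
  rw [e1] at h
  exact h

lemma tendsto_det_entries {α : Type*} {n : ℕ} {l : Filter α} {f : α → Matrix (Fin n) (Fin n) ℝ}
    {A : Matrix (Fin n) (Fin n) ℝ} (h : ∀ k j, Tendsto (fun x => f x k j) l (𝓝 (A k j))) :
    Tendsto (fun x => (f x).det) l (𝓝 A.det) := by
  simp only [Matrix.det_apply']
  exact tendsto_finset_sum _ fun σ _ =>
    ((tendsto_finset_prod _ fun i _ => h (σ i) i).const_mul _)

lemma rem_tendsto {N : ℕ} (hN : 1 ≤ N) (a : ℝ) :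
    Tendsto (fun ε : ℝ => rem N (a * ε) / ε ^ (N - 1)) (𝓝[>] (0:ℝ)) (𝓝 0) := by
  set C : ℝ := (N.succ : ℝ) / ((Nat.factorial N : ℝ) * N) with hC
  have habs : Tendsto (fun ε : ℝ => |a * ε|) (𝓝[>] (0:ℝ)) (𝓝 0) := by
    have h1 : Tendsto (fun ε : ℝ => |a * ε|) (𝓝 (0:ℝ)) (𝓝 |a * 0|) :=
      (continuous_abs.comp (continuous_const.mul continuous_id)).tendsto 0
    simpa using h1.mono_left nhdsWithin_le_nhds
  have hev : ∀ᶠ ε in 𝓝[>] (0:ℝ), |rem N (a * ε) / ε ^ (N - 1)| ≤ (|a| ^ N * C) * ε := by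
    filter_upwards [habs.eventually (eventually_le_nhds (by norm_num : (0:ℝ) < 1)),
      self_mem_nhdsWithin] with ε h1 h2
    have hε : (0:ℝ) < ε := h2
    have hb := Real.exp_bound h1 (lt_of_lt_of_le one_pos hN)
    have hrem : |rem N (a * ε)| ≤ |a * ε| ^ N * C := hb
    rw [abs_div, abs_pow, abs_of_pos hε]
    rw [div_le_iff₀ (by positivity)]
    calc |rem N (a * ε)| ≤ |a * ε| ^ N * C := hrem
      _ = |a| ^ N * C * ε ^ N := by rw [abs_mul, abs_of_pos hε, mul_pow]; ring
      _ = |a| ^ N * C * ε * ε ^ (N - 1) := by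
          rw [mul_assoc (|a| ^ N * C), ← pow_succ']
          congr 2
          omega
  have hg : Tendsto (fun ε : ℝ => (|a| ^ N * C) * ε) (𝓝[>] (0:ℝ)) (𝓝 0) := by
    have h0 : Tendsto (fun ε : ℝ => ε) (𝓝[>] (0:ℝ)) (𝓝 0) :=
      tendsto_id.mono_left nhdsWithin_le_nhds
    simpa using h0.const_mul (|a| ^ N * C)
  exact squeeze_zero_norm' hev hg

lemma pairsCard_eq_sum (N : ℕ) : pairsCard N = ∑ i ∈ Finset.range N, i := by
  have h1 := two_mul_pairs_card N
  have h2 := Finset.sum_range_id_mul_two N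
  have h3 : N * (N - 1) = N * N - N := by
    cases N with
    | zero => rfl
    | succ n => rw [Nat.succ_sub_one, Nat.mul_succ, Nat.add_sub_cancel]
  have h5 : 2 * pairsCard N = 2 * ∑ i ∈ Finset.range N, i := by
    rw [h1, ← h3, ← h2]; ring
  omega

lemma T_tendsto {N : ℕ} (hN : 1 ≤ N) (b c : Fin N → ℝ) (g : Fin N → Fin (N+1))
    (hg : ∃ k0, ((g k0 : ℕ) = N)) :
    Tendsto (fun ε : ℝ =>
        Matrix.det (Matrix.of fun k j => uRow N b c ε k (g k) j) / ε ^ pairsCard N)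
      (𝓝[>] (0:ℝ)) (𝓝 0) := by
  classical
  set K : Finset (Fin N) := Finset.univ.filter (fun k => (g k : ℕ) < N) with hK
  set scal : ℝ → Fin N → ℝ := fun ε k =>
    if (g k : ℕ) < N then c k ^ (g k : ℕ) * ε ^ (g k : ℕ) / (((g k : ℕ).factorial : ℝ))
    else ε ^ (N - 1) with hscaldef
  set vec : ℝ → Fin N → Fin N → ℝ := fun ε k j =>
    if (g k : ℕ) < N then b j ^ (g k : ℕ) else rem N (b j * (ε * c k)) / ε ^ (N - 1) with hvecdef
  have hfact : ∀ ε : ℝ, ε ≠ 0 → ∀ k j, uRow N b c ε k (g k) j = scal ε k * vec ε k j := by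
    intro ε hε k j
    by_cases h : (g k : ℕ) < N
    · simp only [uRow, hscaldef, hvecdef, if_pos h]
      rw [mul_pow]
      ring
    · simp only [uRow, hscaldef, hvecdef, if_neg h]
      field_simp
  have hdetfact : ∀ ε : ℝ, ε ≠ 0 →
      Matrix.det (Matrix.of fun k j => uRow N b c ε k (g k) j)
        = (∏ k, scal ε k) * Matrix.det (Matrix.of fun k j => vec ε k j) := by
    intro ε hε
    rw [show (Matrix.of fun k j => uRow N b c ε k (g k) j)
        = (Matrix.of fun k j => scal ε k * vec ε k j) from by
      ext k j; exact hfact ε hε k j]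
    exact Matrix.det_mul_column _ _
  -- limit of det of vec
  have hvec0 : Tendsto (fun ε => Matrix.det (Matrix.of fun k j => vec ε k j)) (𝓝[>] (0:ℝ))
      (𝓝 0) := by
    obtain ⟨k0, hk0⟩ := hg
    have hk0' : ¬ ((g k0 : ℕ) < N) := by omega
    have hlim : Tendsto (fun ε => Matrix.det (Matrix.of fun k j => vec ε k j)) (𝓝[>] (0:ℝ))
        (𝓝 (Matrix.det (Matrix.of fun k j : Fin N =>
          if (g k : ℕ) < N then b j ^ (g k : ℕ) else 0))) := by
      apply tendsto_det_entries
      intro k j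
      by_cases h : (g k : ℕ) < N
      · simp only [Matrix.of_apply, hvecdef, if_pos h]
        exact tendsto_const_nhds
      · simp only [Matrix.of_apply, hvecdef, if_neg h]
        have := rem_tendsto hN (b j * c k)
        apply this.congr
        intro ε
        congr 1
        ring_nf
    rwa [Matrix.det_eq_zero_of_row_eq_zero k0 (fun j => by simp [hk0'])] at hlim
  by_cases hinj : ∀ k ∈ K, ∀ k' ∈ K, (g k : ℕ) = (g k' : ℕ) → k = k'
  · -- injective case
    set s₀ : ℕ := ∑ k ∈ K, (g k : ℕ) with hs₀
    set sc : ℕ := Kᶜ.card with hsc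
    have hkey : pairsCard N ≤ s₀ + (N - 1) * sc := by
      set T : Finset ℕ := K.image (fun k => (g k : ℕ)) with hT
      have hTsub : T ⊆ Finset.range N := by
        intro x hx
        simp only [hT, Finset.mem_image] at hx
        obtain ⟨k, hk, rfl⟩ := hx
        simp only [hK, Finset.mem_filter] at hk
        exact Finset.mem_range.2 hk.2
      have hTcard : T.card = K.card := Finset.card_image_of_injOn (fun k hk k' hk' h => hinj k hk k' hk' h)
      have hTsum : ∑ x ∈ T, x = s₀ := Finset.sum_image (fun k hk k' hk' h => hinj k hk k' hk' h)
      have hsdiff : (∑ x ∈ Finset.range N \ T, x) + ∑ x ∈ T, x = ∑ x ∈ Finset.range N, x :=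
        Finset.sum_sdiff hTsub
      have hbound : ∑ x ∈ Finset.range N \ T, x ≤ (Finset.range N \ T).card * (N - 1) := by
        have := Finset.sum_le_card_nsmul (Finset.range N \ T) id (N - 1) (fun x hx => by
          have := Finset.mem_range.1 (Finset.mem_sdiff.1 hx).1
          simp only [id]
          omega)
        simpa [smul_eq_mul] using this
      have hcards : (Finset.range N \ T).card = sc := by
        rw [Finset.card_sdiff_of_subset hTsub, Finset.card_range, hTcard, hsc, Finset.card_compl,
          Fintype.card_fin]
      rw [pairsCard_eq_sum]
      calc ∑ i ∈ Finset.range N, i = (∑ x ∈ Finset.range N \ T, x) + ∑ x ∈ T, x := hsdiff.symm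
        _ ≤ (Finset.range N \ T).card * (N - 1) + s₀ := by rw [hTsum]; omega
        _ = sc * (N - 1) + s₀ := by rw [hcards]
        _ = s₀ + (N - 1) * sc := by ring
    set e : ℕ := s₀ + (N - 1) * sc - pairsCard N with he
    set Cg : ℝ := ∏ k ∈ K, (c k ^ (g k : ℕ) / (((g k : ℕ).factorial : ℝ))) with hCg
    have hprodscal : ∀ ε : ℝ, ∏ k, scal ε k = Cg * ε ^ (s₀ + (N - 1) * sc) := by
      intro ε
      rw [← Finset.prod_mul_prod_compl K (scal ε)]
      have h1 : ∏ k ∈ K, scal ε k = Cg * ε ^ s₀ := by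
        have hc : ∀ k ∈ K, scal ε k
            = (c k ^ (g k : ℕ) / (((g k : ℕ).factorial : ℝ))) * ε ^ (g k : ℕ) := by
          intro k hk
          simp only [hK, Finset.mem_filter] at hk
          simp only [hscaldef, if_pos hk.2]
          ring
        rw [Finset.prod_congr rfl hc, Finset.prod_mul_distrib, Finset.prod_pow_eq_pow_sum]
      have h2 : ∏ k ∈ Kᶜ, scal ε k = ε ^ ((N - 1) * sc) := by
        have hc : ∀ k ∈ Kᶜ, scal ε k = ε ^ (N - 1) := by
          intro k hk
          simp only [hK, Finset.mem_compl, Finset.mem_filter, Finset.mem_univ, true_and] at hk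
          simp only [hscaldef, if_neg hk]
        rw [Finset.prod_congr rfl hc, Finset.prod_const, ← pow_mul]
      rw [h1, h2, pow_add]
      ring
    have heq : ∀ᶠ ε in 𝓝[>] (0:ℝ),
        Cg * ε ^ e * Matrix.det (Matrix.of fun k j => vec ε k j)
          = Matrix.det (Matrix.of fun k j => uRow N b c ε k (g k) j) / ε ^ pairsCard N := by
      filter_upwards [self_mem_nhdsWithin] with ε hε
      have hε' : (ε : ℝ) ≠ 0 := ne_of_gt hε
      rw [hdetfact ε hε', hprodscal ε]
      rw [show s₀ + (N - 1) * sc = pairsCard N + e from by omega, pow_add]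
      field_simp
    have hpow : Tendsto (fun ε : ℝ => ε ^ e) (𝓝[>] (0:ℝ)) (𝓝 ((0:ℝ) ^ e)) :=
      ((continuous_pow e).tendsto 0).mono_left nhdsWithin_le_nhds
    have := ((hpow.const_mul Cg).mul hvec0)
    rw [mul_zero] at this
    exact Tendsto.congr' heq this
  · -- non-injective case: determinant vanishes identically
    push_neg at hinj
    obtain ⟨k, hk, k', hk', hgkk', hne⟩ := hinj
    have hrow : ∀ ε : ℝ, (Matrix.of fun k j => vec ε k j) k = (Matrix.of fun k j => vec ε k j) k' := by
      intro ε
      funext j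
      simp only [hK, Finset.mem_filter] at hk hk'
      simp only [Matrix.of_apply, hvecdef, if_pos hk.2, if_pos hk'.2, hgkk']
    have hzero : ∀ ε : ℝ, ε ≠ 0 →
        Matrix.det (Matrix.of fun k j => uRow N b c ε k (g k) j) / ε ^ pairsCard N = 0 := by
      intro ε hε
      rw [hdetfact ε hε, Matrix.det_zero_of_row_eq hne (hrow ε), mul_zero, zero_div]
    apply Tendsto.congr' _ tendsto_const_nhds
    filter_upwards [self_mem_nhdsWithin] with ε hε
    exact (hzero ε (ne_of_gt hε)).symm

lemma vdm_smul {N : ℕ} (ε : ℝ) (v : Fin N → ℝ) :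
    vdm (fun k => ε * v k) = ε ^ pairsCard N * vdm v := by
  rw [vdm, vdm, pairsCard]
  rw [Finset.prod_congr rfl (fun p _ => show ε * v p.2 - ε * v p.1 = ε * (v p.2 - v p.1) by ring)]
  rw [Finset.prod_mul_distrib, Finset.prod_const]

lemma hexp_row {N : ℕ} (b c : Fin N → ℝ) (ε : ℝ) (k j : Fin N) :
    Real.exp (b j * (ε * c k)) = ∑ m : Fin (N+1), uRow N b c ε k m j := by
  rw [Fin.sum_univ_castSucc]
  have hlast : uRow N b c ε k (Fin.last N) j = rem N (b j * (ε * c k)) := by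
    simp [uRow]
  have hcs : ∀ m : Fin N, uRow N b c ε k (Fin.castSucc m) j
      = (b j * (ε * c k)) ^ (m : ℕ) / (((m : ℕ).factorial : ℝ)) := by
    intro m
    simp only [uRow, Fin.coe_castSucc, if_pos m.isLt, mul_pow]
  rw [hlast, Finset.sum_congr rfl (fun m _ => hcs m),
    Fin.sum_univ_eq_sum_range (fun i => (b j * (ε * c k)) ^ i / ((i.factorial : ℝ))) N, rem]
  ring

lemma det_exp_tendsto {N : ℕ} (hN : 1 ≤ N) (b c : Fin N → ℝ) :
    Tendsto (fun ε : ℝ =>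
        Matrix.det (Matrix.of fun k j : Fin N => Real.exp (b j * (ε * c k))) / ε ^ pairsCard N)
      (𝓝[>] (0:ℝ))
      (𝓝 (vdm b * vdm c / ∏ m ∈ Finset.range N, ((Nat.factorial m : ℝ)))) := by
  classical
  set L : ℝ := vdm b * vdm c / ∏ m ∈ Finset.range N, ((Nat.factorial m : ℝ)) with hL
  set P : (Fin N → Fin (N+1)) → Prop := fun g => ∃ k, ((g k : ℕ) = N) with hP
  have hdecomp : ∀ ε : ℝ,
      Matrix.det (Matrix.of fun k j : Fin N => Real.exp (b j * (ε * c k)))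
        = ε ^ pairsCard N * L
          + ∑ g ∈ Finset.univ.filter P,
              Matrix.det (Matrix.of fun k j => uRow N b c ε k (g k) j) := by
    intro ε
    have h1 : (Matrix.of fun k j : Fin N => Real.exp (b j * (ε * c k)))
        = (Matrix.of fun k j : Fin N => ∑ m : Fin (N+1), uRow N b c ε k m j) := by
      ext k j
      exact hexp_row b c ε k j
    rw [h1, det_row_sum, ← Finset.sum_filter_add_sum_filter_not Finset.univ P]
    have h2 : ∑ g ∈ Finset.univ.filter (fun g => ¬ P g),
        Matrix.det (Matrix.of fun k j => uRow N b c ε k (g k) j) = ε ^ pairsCard N * L := by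
      have h3 : ∑ g ∈ Finset.univ.filter (fun g => ¬ P g),
          Matrix.det (Matrix.of fun k j => uRow N b c ε k (g k) j)
          = ∑ g' : Fin N → Fin N,
              Matrix.det (Matrix.of fun k j => uRow N b c ε k (Fin.castSucc (g' k)) j) := by
        apply Finset.sum_nbij' (i := fun (g : Fin N → Fin (N+1)) (k : Fin N) =>
            (⟨min (g k : ℕ) (N-1), by omega⟩ : Fin N))
          (j := fun (g' : Fin N → Fin N) (k : Fin N) => Fin.castSucc (g' k))
        · intro g hg
          exact Finset.mem_univ _
        · intro g' _
          simp only [Finset.mem_filter, Finset.mem_univ, true_and, hP]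
          push_neg
          intro k
          have := (g' k).isLt
          simp only [Fin.coe_castSucc]
          omega
        · intro g hg
          simp only [Finset.mem_filter, Finset.mem_univ, true_and, hP] at hg
          push_neg at hg
          funext k
          have h1 := (g k).isLt
          have h2 := hg k
          apply Fin.ext
          simp only [Fin.coe_castSucc]
          omega
        · intro g' _
          funext k
          apply Fin.ext
          have := (g' k).isLt
          simp only [Fin.coe_castSucc]
          omega
        · intro g hg
          simp only [Finset.mem_filter, Finset.mem_univ, true_and, hP] at hg
          push_neg at hg
          have hc : ∀ k, Fin.castSucc ((⟨min (g k : ℕ) (N-1), by omega⟩ : Fin N)) = g k := by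
            intro k
            have h1 := (g k).isLt
            have h2 := hg k
            apply Fin.ext
            simp only [Fin.coe_castSucc]
            omega
          simp only [hc]
      rw [h3, ← det_row_sum (v := fun k m j => uRow N b c ε k (Fin.castSucc m) j)]
      have h4 : (Matrix.of fun k j : Fin N => ∑ m : Fin N, uRow N b c ε k (Fin.castSucc m) j)
          = (Matrix.of fun k m : Fin N => (ε * c k) ^ (m:ℕ) / (((m:ℕ).factorial : ℝ)))
            * (Matrix.of fun m j : Fin N => b j ^ (m:ℕ)) := by
        ext k j
        rw [Matrix.mul_apply]
        simp only [Matrix.of_apply]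
        apply Finset.sum_congr rfl
        intro m _
        simp only [uRow, Fin.coe_castSucc, if_pos m.isLt]
        ring
      rw [h4, Matrix.det_mul]
      have h5 : Matrix.det (Matrix.of fun m j : Fin N => b j ^ (m:ℕ)) = vdm b := by
        have hT : (Matrix.of fun m j : Fin N => b j ^ (m:ℕ)) = (Matrix.vandermonde b)ᵀ := by
          ext m j
          simp [Matrix.vandermonde, Matrix.transpose_apply]
        rw [hT, Matrix.det_transpose, Matrix.det_vandermonde, ← vdm_eq_prod]
      have h6 : Matrix.det (Matrix.of fun k m : Fin N =>
            (ε * c k) ^ (m:ℕ) / (((m:ℕ).factorial : ℝ)))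
          = (∏ m ∈ Finset.range N, ((Nat.factorial m : ℝ)))⁻¹ * (ε ^ pairsCard N * vdm c) := by
        have hB : (Matrix.of fun k m : Fin N => (ε * c k) ^ (m:ℕ) / (((m:ℕ).factorial : ℝ)))
            = (Matrix.of fun k m : Fin N =>
                ((((m:ℕ).factorial : ℝ)))⁻¹ * Matrix.vandermonde (fun k => ε * c k) k m) := by
          ext k m
          simp [Matrix.vandermonde, div_eq_inv_mul]
        rw [hB, Matrix.det_mul_row, Matrix.det_vandermonde, ← vdm_eq_prod, vdm_smul]
        congr 1
        rw [← Finset.prod_inv_distrib]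
        exact Fin.prod_univ_eq_prod_range (fun m => ((Nat.factorial m : ℝ))⁻¹) N
      rw [h5, h6, hL]
      have hF : (∏ m ∈ Finset.range N, ((Nat.factorial m : ℝ))) ≠ 0 := by
        apply Finset.prod_ne_zero_iff.2
        intro m _
        exact_mod_cast (Nat.factorial_pos m).ne'
      field_simp
    rw [h2, add_comm]
  have heq : ∀ᶠ ε in 𝓝[>] (0:ℝ),
      L + ∑ g ∈ Finset.univ.filter P,
          Matrix.det (Matrix.of fun k j => uRow N b c ε k (g k) j) / ε ^ pairsCard N
        = Matrix.det (Matrix.of fun k j : Fin N => Real.exp (b j * (ε * c k))) / ε ^ pairsCard N := by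
    filter_upwards [self_mem_nhdsWithin] with ε hε
    have hε' : (ε : ℝ) ^ pairsCard N ≠ 0 := pow_ne_zero _ (ne_of_gt hε)
    rw [hdecomp ε, add_div, Finset.sum_div, mul_div_cancel_left₀ _ hε']
  have hsum : Tendsto (fun ε : ℝ => ∑ g ∈ Finset.univ.filter P,
      Matrix.det (Matrix.of fun k j => uRow N b c ε k (g k) j) / ε ^ pairsCard N)
      (𝓝[>] (0:ℝ)) (𝓝 0) := by
    have := tendsto_finset_sum (Finset.univ.filter P)
      (fun g (hg : g ∈ Finset.univ.filter P) => T_tendsto hN b c g (by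
        simpa only [hP, Finset.mem_filter, Finset.mem_univ, true_and] using hg))
    simpa using this
  have := (tendsto_const_nhds : Tendsto (fun _ : ℝ => L) (𝓝[>] (0:ℝ)) (𝓝 L)).add hsum
  rw [add_zero] at this
  exact Tendsto.congr' heq this

end Aux

set_option maxHeartbeats 1000000 in
open Matrix in
/-- The noncolliding Brownian motion started at the origin has the GUE eigenvalue
distribution with variance `t` as its single-time distribution. -/
theorem noncolliding_bm_gue_limit (N : ℕ) (hN : 1 ≤ N) (t : ℝ) (ht : 0 < t)
    (y ξ : Fin N → ℝ) (hy : ∀ j k : Fin N, j < k → y j < y k)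
    (hξ : ∀ j k : Fin N, j < k → ξ j < ξ k) :
    Tendsto
      (fun ε : ℝ =>
        (vdm y / vdm (fun k => ε * ξ k)) *
          Matrix.det (Matrix.of fun j k : Fin N => heatKernel t (y j) (ε * ξ k)))
      (𝓝[>] 0)
      (𝓝 (t ^ (-(N : ℝ) ^ 2 / 2) * (2 * Real.pi) ^ (-(N : ℝ) / 2) *
        ((∏ j ∈ Finset.range N, (Nat.factorial j : ℝ))⁻¹) *
        Real.exp (-(∑ j : Fin N, y j ^ 2) / (2 * t)) * (vdm y) ^ 2)) := by
  classical
  set F : ℝ := ∏ m ∈ Finset.range N, ((Nat.factorial m : ℝ)) with hF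
  have hFne : F ≠ 0 := by
    rw [hF]
    apply Finset.prod_ne_zero_iff.2
    intro m _
    exact_mod_cast (Nat.factorial_pos m).ne'
  have hξpos : 0 < vdm ξ := by
    rw [vdm]
    apply Finset.prod_pos
    intro p hp
    simp only [Finset.mem_filter] at hp
    exact sub_pos.2 (hξ p.1 p.2 hp.2)
  have hξne : vdm ξ ≠ 0 := ne_of_gt hξpos
  set rr : Fin N → ℝ := fun j => Real.exp (-(y j)^2/(2*t)) / Real.sqrt (2*Real.pi*t) with hrr
  set cc : ℝ → Fin N → ℝ := fun ε k => Real.exp (-(ε * ξ k)^2/(2*t)) with hcc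
  set b : Fin N → ℝ := fun j => y j / t with hb
  have hentry : ∀ x yj : ℝ, heatKernel t yj x
      = Real.exp (-x^2/(2*t)) * ((Real.exp (-yj^2/(2*t)) / Real.sqrt (2*Real.pi*t))
          * Real.exp ((yj/t) * x)) := by
    intro x yj
    rw [heatKernel, show -(x - yj)^2/(2*t) = -x^2/(2*t) + (-yj^2/(2*t) + (yj/t)*x) from by
      field_simp
      ring]
    rw [Real.exp_add, Real.exp_add]
    ring
  have hdetfact : ∀ ε : ℝ,
      Matrix.det (Matrix.of fun j k : Fin N => heatKernel t (y j) (ε * ξ k))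
        = (∏ k, cc ε k) * ((∏ j, rr j)
            * Matrix.det (Matrix.of fun k j : Fin N => Real.exp (b j * (ε * ξ k)))) := by
    intro ε
    have h1 : Matrix.det (Matrix.of fun j k : Fin N => heatKernel t (y j) (ε * ξ k))
        = Matrix.det (Matrix.of fun k j : Fin N => heatKernel t (y j) (ε * ξ k)) := by
      rw [← Matrix.det_transpose]
      rfl
    rw [h1]
    have h2 : (Matrix.of fun k j : Fin N => heatKernel t (y j) (ε * ξ k))
        = (Matrix.of fun k j : Fin N => cc ε k *
            ((Matrix.of fun k j : Fin N => rr j *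
              (Matrix.of fun k j : Fin N => Real.exp (b j * (ε * ξ k))) k j)) k j) := by
      ext k j
      simp only [Matrix.of_apply, hcc, hrr, hb]
      exact hentry (ε * ξ k) (y j)
    rw [h2, Matrix.det_mul_column, Matrix.det_mul_row]
  -- limits
  have hcclim : Tendsto (fun ε : ℝ => ∏ k, cc ε k) (𝓝[>] (0:ℝ)) (𝓝 1) := by
    have h := tendsto_finset_prod (Finset.univ : Finset (Fin N))
      (f := fun k (ε : ℝ) => cc ε k) (a := fun _ => (1:ℝ))
      (fun k _ => by
        have hcont : Continuous (fun ε : ℝ => Real.exp (-(ε * ξ k)^2/(2*t))) := by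
          continuity
        have := (hcont.tendsto 0).mono_left (nhdsWithin_le_nhds (s := Set.Ioi (0:ℝ)))
        simpa [hcc] using this)
    simpa using h
  have hdetE := det_exp_tendsto hN b ξ
  -- combined limit
  have hmain : Tendsto
      (fun ε : ℝ => (vdm y / vdm ξ) * ((∏ k, cc ε k) * ((∏ j, rr j)
          * (Matrix.det (Matrix.of fun k j : Fin N => Real.exp (b j * (ε * ξ k)))
              / ε ^ pairsCard N))))
      (𝓝[>] (0:ℝ))
      (𝓝 ((vdm y / vdm ξ) * (1 * ((∏ j, rr j) * (vdm b * vdm ξ / F))))) :=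
    tendsto_const_nhds.mul (hcclim.mul (tendsto_const_nhds.mul hdetE))
  have heq : ∀ᶠ ε in 𝓝[>] (0:ℝ),
      (vdm y / vdm ξ) * ((∏ k, cc ε k) * ((∏ j, rr j)
          * (Matrix.det (Matrix.of fun k j : Fin N => Real.exp (b j * (ε * ξ k)))
              / ε ^ pairsCard N)))
        = (vdm y / vdm (fun k => ε * ξ k)) *
            Matrix.det (Matrix.of fun j k : Fin N => heatKernel t (y j) (ε * ξ k)) := by
    filter_upwards [self_mem_nhdsWithin] with ε hε
    have hεne : (ε:ℝ) ^ pairsCard N ≠ 0 := pow_ne_zero _ (ne_of_gt hε)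
    rw [hdetfact ε, vdm_smul]
    simp only [div_eq_mul_inv, mul_inv]
    ring
  have hlim := Tendsto.congr' heq hmain
  -- compute the limit value
  have hrrprod : ∏ j, rr j = Real.exp (-(∑ j : Fin N, y j ^ 2)/(2*t))
      * ((Real.sqrt (2*Real.pi*t))⁻¹) ^ N := by
    rw [hrr, Finset.prod_div_distrib, ← Real.exp_sum, Finset.prod_const, Finset.card_univ,
      Fintype.card_fin, div_eq_mul_inv, ← inv_pow]
    congr 2
    rw [← Finset.sum_div]
    congr 1
    simp
  have hbv : vdm b = (t⁻¹) ^ pairsCard N * vdm y := by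
    rw [hb, show (fun j => y j / t) = (fun j => t⁻¹ * y j) from funext fun j => div_eq_inv_mul _ _,
      vdm_smul]
  have hx : (0:ℝ) < 2 * Real.pi * t := by positivity
  have hMc : (pairsCard N : ℝ) = ((N:ℝ) * N - N) / 2 := by
    have h := two_mul_pairs_card N
    have hle : N ≤ N * N := Nat.le_mul_of_pos_left N hN
    have h2 : ((2 * pairsCard N : ℕ) : ℝ) = ((N * N - N : ℕ) : ℝ) := by rw [h]
    push_cast [Nat.cast_sub hle] at h2
    linarith
  have hST : ((Real.sqrt (2*Real.pi*t))⁻¹) ^ N * (t⁻¹) ^ pairsCard N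
      = t ^ (-(N : ℝ) ^ 2 / 2) * (2 * Real.pi) ^ (-(N : ℝ) / 2) := by
    have hs : ((Real.sqrt (2*Real.pi*t))⁻¹) ^ N = (2*Real.pi*t) ^ (-(N:ℝ)/2) := by
      rw [Real.sqrt_eq_rpow, ← Real.rpow_neg hx.le,
        ← Real.rpow_natCast ((2*Real.pi*t) ^ (-(1/2):ℝ)) N, ← Real.rpow_mul hx.le]
      congr 1
      ring
    have htM : (t⁻¹) ^ pairsCard N = t ^ (-(pairsCard N : ℝ)) := by
      rw [Real.rpow_neg ht.le, Real.rpow_natCast, inv_pow]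
    rw [hs, htM, Real.mul_rpow (by positivity) ht.le, mul_assoc, ← Real.rpow_add ht,
      show -(N:ℝ)/2 + -(pairsCard N : ℝ) = -(N:ℝ)^2/2 from by rw [hMc]; ring]
    ring
  rw [show (vdm y / vdm ξ) * (1 * ((∏ j, rr j) * (vdm b * vdm ξ / F)))
      = t ^ (-(N : ℝ) ^ 2 / 2) * (2 * Real.pi) ^ (-(N : ℝ) / 2) * F⁻¹ *
          Real.exp (-(∑ j : Fin N, y j ^ 2) / (2 * t)) * (vdm y) ^ 2 from by
    rw [hrrprod, hbv, ← hST]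
    field_simp [hξne, hFne]] at hlim
  exact hlim
end

section
/- Let κ be a positive integer and let v₁, …, v_κ ∈ ℂ satisfy v_j − v_k + 1 ≠ 0 for all j ≠ k. Then (1/κ!) · Σ_{σ ∈ S_κ} ∏_{1 ≤ p < q ≤ κ} (v_{σ(q)} − v_{σ(p)})/(v_{σ(q)} − v_{σ(p)} + 1) = det_{1 ≤ j,k ≤ κ}[1/(v_j + 1 − v_k)], where S_κ is the symmetric group on κ letters. (This symmetrization identity converts the moment formulas for the O'Connell process into determinantal form.) -/
open Finset

def offP (κ : ℕ) : Finset (Fin κ × Fin κ) := Finset.univ.filter (fun p => p.1 < p.2)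

lemma prodpairs {κ : ℕ} {M : Type*} [CommMonoid M] (f : Fin κ × Fin κ → M) :
    ∏ p ∈ offP κ, f p = ∏ i : Fin κ, ∏ j ∈ Ioi i, f (i, j) := by
  rw [offP, Finset.prod_filter, Fintype.prod_prod_type]
  refine Finset.prod_congr rfl fun i _ => ?_
  rw [← Finset.prod_filter]
  congr 1
  ext j
  simp [Finset.mem_Ioi]

lemma cardpairs {κ : ℕ} : (offP κ).card = κ.choose 2 := by
  rw [offP, Finset.card_filter, Fintype.sum_prod_type]
  have h1 : ∀ i : Fin κ, (∑ j : Fin κ, if (i, j).1 < (i, j).2 then 1 else 0) = (Ioi i).card := by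
    intro i
    rw [← Finset.card_filter]
    congr 1
    ext j; simp [Finset.mem_Ioi]
  simp only [h1, Fin.card_Ioi]
  rw [Fin.sum_univ_eq_sum_range (fun i => κ - 1 - i)]
  rw [Finset.sum_range_reflect (fun i => i) κ]
  rw [Finset.sum_range_id, Nat.choose_two_right]

lemma choose_le_sum : ∀ (n : ℕ) (s : Finset ℕ), s.card = n → n.choose 2 ≤ ∑ x ∈ s, x := by
  intro n
  induction n with
  | zero => intro s _; simp
  | succ m ih =>
    intro s hs
    have hne : s.Nonempty := Finset.card_pos.mp (by omega)
    set M := s.max' hne with hM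
    have hMem : M ∈ s := s.max'_mem hne
    have hsub : s ⊆ Finset.range (M + 1) := by
      intro x hx
      simp only [Finset.mem_range]
      exact Nat.lt_succ_of_le (s.le_max' x hx)
    have hcard : m + 1 ≤ M + 1 := by
      rw [← hs]
      simpa using Finset.card_le_card hsub
    have h1 : (s.erase M).card = m := by rw [Finset.card_erase_of_mem hMem, hs]; omega
    have h2 := ih (s.erase M) h1
    have h3 : ∑ x ∈ s, x = M + ∑ x ∈ s.erase M, x := (Finset.add_sum_erase s id hMem).symm
    have h4 : (m + 1).choose 2 = m + m.choose 2 := by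
      rw [Nat.choose_succ_succ, Nat.choose_one_right]
    omega

lemma exists_rep {κ : ℕ} (d : Fin κ → ℕ) (h : ∑ i, d i < κ.choose 2) :
    ∃ i j, i ≠ j ∧ d i = d j := by
  by_contra hc
  push_neg at hc
  have hinj : Function.Injective d := by
    intro a b hab
    by_contra hne
    exact hc a b hne hab
  have h1 : ∑ x ∈ Finset.univ.image d, x = ∑ i, d i := Finset.sum_image (fun a _ b _ h => hinj h)
  have h2 : (Finset.univ.image d).card = κ := by
    rw [Finset.card_image_of_injective _ hinj, Finset.card_univ, Fintype.card_fin]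
  have := choose_le_sum κ (Finset.univ.image d) h2
  omega

lemma antisym_monomial {κ : ℕ} (x : Fin κ → ℂ) (d : Fin κ → ℕ) {i j : Fin κ}
    (hij : i ≠ j) (hd : d i = d j) :
    ∑ σ : Equiv.Perm (Fin κ), ((Equiv.Perm.sign σ : ℤ) : ℂ) * ∏ a, x (σ a) ^ d a = 0 := by
  have h := Matrix.det_zero_of_column_eq (M := Matrix.of fun a b : Fin κ => x a ^ d b) hij
    (fun k => by simp [hd])
  rw [Matrix.det_apply] at h
  simpa [Units.smul_def, zsmul_eq_mul] using h

lemma fiber_prod {κ : ℕ} (s : Finset (Fin κ × Fin κ)) (g : Fin κ × Fin κ → Fin κ)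
    (y : Fin κ → ℂ) :
    ∏ p ∈ s, y (g p) = ∏ i : Fin κ, y i ^ (s.filter (fun p => g p = i)).card := by
  rw [← Finset.prod_fiberwise_of_maps_to (g := g) (fun p _ => Finset.mem_univ (g p)) (fun p => y (g p))]
  refine Finset.prod_congr rfl fun i _ => ?_
  rw [Finset.prod_congr rfl (fun p hp => by rw [(Finset.mem_filter.mp hp).2]),
    Finset.prod_const]

lemma fiber_card {κ : ℕ} (s : Finset (Fin κ × Fin κ)) (g : Fin κ × Fin κ → Fin κ) :
    ∑ i : Fin κ, (s.filter (fun p => g p = i)).card = s.card :=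
  (Finset.card_eq_sum_card_fiberwise (fun p _ => Finset.mem_univ (g p))).symm
lemma vanishing {κ : ℕ} (x : Fin κ → ℂ) (T : Finset (Fin κ × Fin κ))
    (hT : T ⊆ offP κ) (hTne : T ≠ offP κ) :
    ∑ σ : Equiv.Perm (Fin κ), ((Equiv.Perm.sign σ : ℤ) : ℂ)
      * ∏ p ∈ T, (x (σ p.1) - x (σ p.2)) = 0 := by
  have hexp : ∀ σ : Equiv.Perm (Fin κ), ∏ p ∈ T, (x (σ p.1) - x (σ p.2)) =
      ∑ U ∈ T.powerset, (-1 : ℂ) ^ (T \ U).card *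
        ∏ a : Fin κ, x (σ a) ^ ((U.filter (fun p => p.1 = a)).card
          + ((T \ U).filter (fun p => p.2 = a)).card) := by
    intro σ
    have : ∀ p : Fin κ × Fin κ, x (σ p.1) - x (σ p.2) = x (σ p.1) + (-(x (σ p.2))) := by
      intro p; ring
    rw [Finset.prod_congr rfl (fun p _ => this p), Finset.prod_add]
    refine Finset.sum_congr rfl fun U hU => ?_
    have h1 : ∏ p ∈ T \ U, (-(x (σ p.2))) = (-1 : ℂ) ^ (T \ U).card * ∏ p ∈ T \ U, x (σ p.2) := by
      rw [← Finset.prod_const, ← Finset.prod_mul_distrib]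
      exact Finset.prod_congr rfl fun p _ => by ring
    rw [h1, fiber_prod U (fun p => p.1) (fun i => x (σ i)),
      fiber_prod (T \ U) (fun p => p.2) (fun i => x (σ i))]
    simp_rw [pow_add, Finset.prod_mul_distrib]
    ring
  simp_rw [hexp, Finset.mul_sum]
  rw [Finset.sum_comm]
  refine Finset.sum_eq_zero fun U hU => ?_
  have hcard : ∑ a : Fin κ, ((U.filter (fun p => p.1 = a)).card
      + ((T \ U).filter (fun p => p.2 = a)).card) < κ.choose 2 := by
    rw [Finset.sum_add_distrib, fiber_card, fiber_card]
    have hUT : U ⊆ T := Finset.mem_powerset.mp hU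
    have h1 : U.card + (T \ U).card = T.card := by
      rw [Finset.card_sdiff_of_subset hUT]; have := Finset.card_le_card hUT; omega
    have h2 : T.card < (offP κ).card :=
      Finset.card_lt_card (hT.ssubset_of_ne hTne)
    rw [h1, ← cardpairs]; exact h2
  obtain ⟨i, j, hij, hd⟩ := exists_rep _ hcard
  have h0 := antisym_monomial x (fun a => (U.filter (fun p => p.1 = a)).card + ((T \ U).filter (fun p => p.2 = a)).card) hij hd
  calc ∑ σ : Equiv.Perm (Fin κ), ((Equiv.Perm.sign σ : ℤ) : ℂ) * ((-1 : ℂ) ^ (T \ U).card *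
        ∏ a : Fin κ, x (σ a) ^ ((U.filter (fun p => p.1 = a)).card
          + ((T \ U).filter (fun p => p.2 = a)).card))
      = (-1 : ℂ) ^ (T \ U).card * ∑ σ : Equiv.Perm (Fin κ),
        ((Equiv.Perm.sign σ : ℤ) : ℂ) * ∏ a : Fin κ, x (σ a) ^ ((U.filter (fun p => p.1 = a)).card
          + ((T \ U).filter (fun p => p.2 = a)).card) := by
        rw [Finset.mul_sum]; exact Finset.sum_congr rfl fun σ _ => by ring
    _ = 0 := by rw [h0, mul_zero]
lemma vand_perm {κ : ℕ} (v : Fin κ → ℂ) (σ : Equiv.Perm (Fin κ)) :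
    ∏ p ∈ offP κ, (v (σ p.2) - v (σ p.1)) =
      ((Equiv.Perm.sign σ : ℤ) : ℂ) * ∏ p ∈ offP κ, (v p.2 - v p.1) := by
  have h3 : (Matrix.vandermonde v).submatrix σ id = Matrix.vandermonde (fun i => v (σ i)) := by
    ext i j; simp [Matrix.vandermonde_apply, Matrix.submatrix_apply]
  have h2 := Matrix.det_permute σ (Matrix.vandermonde v)
  rw [h3, Matrix.det_vandermonde, Matrix.det_vandermonde] at h2
  rw [prodpairs, prodpairs]
  simpa using h2

lemma vand_perm' {κ : ℕ} (v : Fin κ → ℂ) (σ : Equiv.Perm (Fin κ)) :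
    ∏ p ∈ offP κ, (v (σ p.1) - v (σ p.2)) =
      ((Equiv.Perm.sign σ : ℤ) : ℂ) * ∏ p ∈ offP κ, (v p.1 - v p.2) := by
  have e1 : ∏ p ∈ offP κ, (v (σ p.1) - v (σ p.2))
      = (-1 : ℂ) ^ (offP κ).card * ∏ p ∈ offP κ, (v (σ p.2) - v (σ p.1)) := by
    rw [← Finset.prod_const, ← Finset.prod_mul_distrib]
    exact Finset.prod_congr rfl fun p _ => by ring
  have e2 : ∏ p ∈ offP κ, (v p.1 - v p.2)
      = (-1 : ℂ) ^ (offP κ).card * ∏ p ∈ offP κ, (v p.2 - v p.1) := by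
    rw [← Finset.prod_const, ← Finset.prod_mul_distrib]
    exact Finset.prod_congr rfl fun p _ => by ring
  rw [e1, e2, vand_perm]; ring

lemma sign_sq {κ : ℕ} (σ : Equiv.Perm (Fin κ)) :
    ((Equiv.Perm.sign σ : ℤ) : ℂ) * ((Equiv.Perm.sign σ : ℤ) : ℂ) = 1 := by
  rw [← Int.cast_mul, ← Units.val_mul, Int.units_mul_self]
  norm_num

lemma lemP {κ : ℕ} (v : Fin κ → ℂ) :
    ∑ σ : Equiv.Perm (Fin κ), ((Equiv.Perm.sign σ : ℤ) : ℂ)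
        * ∏ p ∈ offP κ, (v (σ p.1) - v (σ p.2) + 1) =
      (Nat.factorial κ : ℂ) * ∏ p ∈ offP κ, (v p.1 - v p.2) := by
  have hexp : ∀ σ : Equiv.Perm (Fin κ), ∏ p ∈ offP κ, (v (σ p.1) - v (σ p.2) + 1) =
      ∑ T ∈ (offP κ).powerset, ∏ p ∈ T, (v (σ p.1) - v (σ p.2)) := by
    intro σ
    rw [Finset.prod_add]
    simp
  simp_rw [hexp, Finset.mul_sum]
  rw [Finset.sum_comm]
  rw [Finset.sum_eq_single_of_mem (offP κ) (Finset.mem_powerset_self _)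
    (fun T hT hTne => vanishing v T (Finset.mem_powerset.mp hT) hTne)]
  have : ∀ σ : Equiv.Perm (Fin κ), ((Equiv.Perm.sign σ : ℤ) : ℂ)
      * ∏ p ∈ offP κ, (v (σ p.1) - v (σ p.2)) = ∏ p ∈ offP κ, (v p.1 - v p.2) := by
    intro σ
    rw [vand_perm', ← mul_assoc, sign_sq, one_mul]
  rw [Finset.sum_congr rfl (fun σ _ => this σ), Finset.sum_const, Finset.card_univ,
    Fintype.card_perm, Fintype.card_fin, nsmul_eq_mul]
lemma mem_offP {κ : ℕ} {p : Fin κ × Fin κ} : p ∈ offP κ ↔ p.1 < p.2 := by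
  simp [offP]

lemma prod_symm_perm {κ : ℕ} (F : Fin κ → Fin κ → ℂ) (hF : ∀ a b, F a b = F b a)
    (σ : Equiv.Perm (Fin κ)) :
    ∏ p ∈ offP κ, F (σ p.1) (σ p.2) = ∏ p ∈ offP κ, F p.1 p.2 := by
  refine Finset.prod_nbij' (fun p => if σ p.1 < σ p.2 then (σ p.1, σ p.2) else (σ p.2, σ p.1))
    (fun q => if σ⁻¹ q.1 < σ⁻¹ q.2 then (σ⁻¹ q.1, σ⁻¹ q.2) else (σ⁻¹ q.2, σ⁻¹ q.1))
    ?_ ?_ ?_ ?_ ?_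
  · intro p hp
    rw [mem_offP] at hp ⊢
    have hne : σ p.1 ≠ σ p.2 := fun h => absurd (σ.injective h) (ne_of_lt hp)
    rcases lt_or_gt_of_ne hne with h | h
    · simp [h]
    · simp [not_lt.mpr h.le, h]
  · intro q hq
    rw [mem_offP] at hq ⊢
    have hne : σ⁻¹ q.1 ≠ σ⁻¹ q.2 := fun h => absurd (σ⁻¹.injective h) (ne_of_lt hq)
    rcases lt_or_gt_of_ne hne with h | h
    · rw [Equiv.Perm.inv_def] at h; simp [h]
    · rw [Equiv.Perm.inv_def] at h; simp [not_lt.mpr h.le, h]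
  · intro p hp
    rw [mem_offP] at hp
    by_cases h : σ p.1 < σ p.2
    · simp [h, hp]
    · simp only [h, if_neg, if_false]
      simp only [Equiv.Perm.inv_def, Equiv.symm_apply_apply]
      rw [if_neg (not_lt.mpr (le_of_lt hp))]
  · intro q hq
    rw [mem_offP] at hq
    by_cases h : σ⁻¹ q.1 < σ⁻¹ q.2
    · rw [Equiv.Perm.inv_def] at h; simp [h, hq]
    · simp only [h, if_neg, if_false]
      simp only [Equiv.Perm.inv_def, Equiv.apply_symm_apply]
      rw [if_neg (not_lt.mpr (le_of_lt hq))]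
  · intro p hp
    by_cases h : σ p.1 < σ p.2
    · simp [h]
    · simp only [h, if_false]
      exact hF _ _
lemma H1 {κ : ℕ} (F : Fin κ → Fin κ → ℂ) :
    ∏ i : Fin κ, ∏ j ∈ Finset.univ.erase i, F i j =
      (∏ p ∈ offP κ, F p.1 p.2) * ∏ p ∈ offP κ, F p.2 p.1 := by
  have hsplit : ∀ i : Fin κ, ∏ j ∈ Finset.univ.erase i, F i j =
      (∏ j ∈ Ioi i, F i j) * ∏ j ∈ Iio i, F i j := by
    intro i
    rw [← Finset.prod_filter_mul_prod_filter_not (Finset.univ.erase i) (fun j => i < j)]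
    congr 1
    · congr 1; ext j
      simp only [Finset.mem_filter, Finset.mem_erase, Finset.mem_univ, Finset.mem_Ioi, true_and, and_true]
      constructor
      · rintro ⟨_, h⟩; exact h
      · intro h; exact ⟨(ne_of_lt h).symm, h⟩
    · congr 1; ext j
      simp only [Finset.mem_filter, Finset.mem_erase, Finset.mem_univ, Finset.mem_Iio, true_and, and_true,
        not_lt]
      constructor
      · rintro ⟨hne, h⟩; exact lt_of_le_of_ne h hne
      · intro h; exact ⟨ne_of_lt h, le_of_lt h⟩
  rw [Finset.prod_congr rfl (fun i _ => hsplit i), Finset.prod_mul_distrib]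
  congr 1
  · rw [prodpairs]
  · rw [prodpairs (fun p => F p.2 p.1)]
    exact (Finset.prod_comm' (by simp)).symm
lemma cauchy_det {κ : ℕ} (hκ : 0 < κ) (v : Fin κ → ℂ) (hinj : Function.Injective v)
    (hv : ∀ j k : Fin κ, j ≠ k → v j - v k + 1 ≠ 0) :
    Matrix.det (Matrix.of fun j k : Fin κ => 1 / (v j + 1 - v k)) =
      ((∏ p ∈ offP κ, (v p.2 - v p.1)) * ∏ p ∈ offP κ, (v p.1 - v p.2)) /
        ((∏ p ∈ offP κ, (v p.2 - v p.1 + 1)) * ∏ p ∈ offP κ, (v p.1 - v p.2 + 1)) := by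
  set x : Fin κ → ℂ := fun i => v i + 1 with hx
  have hxv : ∀ i j : Fin κ, x i - v j ≠ 0 := by
    intro i j
    by_cases h : i = j
    · subst h; simp [hx]
    · have := hv i j h
      intro hc; apply this; rw [← hc, hx]; ring
  set P : Fin κ → Polynomial ℂ := fun k => ∏ j ∈ Finset.univ.erase k,
    (Polynomial.X - Polynomial.C (v j)) with hP
  have hdeg : ∀ k, (P k).natDegree < κ := by
    intro k
    rw [hP]
    have : (∏ j ∈ Finset.univ.erase k, (Polynomial.X - Polynomial.C (v j))).natDegree
        = ∑ j ∈ Finset.univ.erase k, (Polynomial.X - Polynomial.C (v j)).natDegree :=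
      Polynomial.natDegree_prod_of_monic _ _ (fun j _ => Polynomial.monic_X_sub_C (v j))
    rw [this]
    simp only [Polynomial.natDegree_X_sub_C, Finset.sum_const, smul_eq_mul, mul_one]
    rw [Finset.card_erase_of_mem (Finset.mem_univ k), Finset.card_univ, Fintype.card_fin]
    omega
  set Cm : Matrix (Fin κ) (Fin κ) ℂ := Matrix.of fun m k => (P k).coeff m with hCm
  have heval : ∀ (z : ℂ) (k : Fin κ), (P k).eval z = ∑ m : Fin κ, z ^ (m : ℕ) * Cm m k := by
    intro z k
    rw [Polynomial.eval_eq_sum_range' (hdeg k) z]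
    have hc : ∀ m : Fin κ, z ^ (m : ℕ) * Cm m k = z ^ (m : ℕ) * (P k).coeff (m : ℕ) :=
      fun m => rfl
    rw [Finset.sum_congr rfl (fun m _ => hc m),
      Fin.sum_univ_eq_sum_range (fun n => z ^ n * (P k).coeff n) κ]
    exact Finset.sum_congr rfl fun i _ => (mul_comm _ _)
  have hVC : ∀ (w : Fin κ → ℂ),
      Matrix.vandermonde w * Cm = Matrix.of fun i k => (P k).eval (w i) := by
    intro w
    ext i k
    rw [Matrix.mul_apply, Matrix.of_apply, heval]
    exact Finset.sum_congr rfl fun j _ => by rw [Matrix.vandermonde_apply]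
  have hPeval : ∀ (z : ℂ) (k : Fin κ), (P k).eval z = ∏ j ∈ Finset.univ.erase k, (z - v j) := by
    intro z k
    rw [hP]
    simp [Polynomial.eval_prod]
  have hdiagV : Matrix.vandermonde v * Cm
      = Matrix.diagonal (fun k => ∏ j ∈ Finset.univ.erase k, (v k - v j)) := by
    rw [hVC]
    ext i k
    by_cases h : i = k
    · subst h
      rw [Matrix.of_apply, hPeval, Matrix.diagonal_apply_eq]
    · rw [Matrix.of_apply, hPeval, Matrix.diagonal_apply_ne _ h]
      exact Finset.prod_eq_zero (Finset.mem_erase.mpr ⟨h, Finset.mem_univ i⟩) (sub_self (v i))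
  have hdetV : Matrix.det (Matrix.vandermonde v) = ∏ p ∈ offP κ, (v p.2 - v p.1) := by
    rw [Matrix.det_vandermonde, prodpairs]
  have hdetVne : Matrix.det (Matrix.vandermonde v) ≠ 0 :=
    Matrix.det_vandermonde_ne_zero_iff.mpr hinj
  have hdetCm : Matrix.det Cm
      = (∏ k, ∏ j ∈ Finset.univ.erase k, (v k - v j)) / Matrix.det (Matrix.vandermonde v) := by
    have := congrArg Matrix.det hdiagV
    rw [Matrix.det_mul, Matrix.det_diagonal] at this
    rw [eq_div_iff hdetVne, mul_comm, this]
  -- the A matrix with x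
  set M : Matrix (Fin κ) (Fin κ) ℂ := Matrix.of fun j k : Fin κ => 1 / (v j + 1 - v k) with hM
  set r : Fin κ → ℂ := fun i => ∏ j, (x i - v j) with hr
  have hA : Matrix.vandermonde x * Cm = Matrix.of fun i k => r i * M i k := by
    rw [hVC]
    ext i k
    rw [Matrix.of_apply, Matrix.of_apply, hPeval]
    have hme : (x i - v k) * ∏ j ∈ Finset.univ.erase k, (x i - v j) = ∏ j, (x i - v j) :=
      Finset.mul_prod_erase Finset.univ (fun j => x i - v j) (Finset.mem_univ k)
    have hMik : M i k = 1 / (x i - v k) := rfl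
    have hri : r i = ∏ j, (x i - v j) := rfl
    rw [hMik, hri, mul_one_div, eq_div_iff (hxv i k), ← hme]
    ring
  have hrne : ∀ i, r i ≠ 0 := fun i => Finset.prod_ne_zero_iff.mpr (fun j _ => hxv i j)
  have hdetA : Matrix.det (Matrix.vandermonde x) * Matrix.det Cm = (∏ i, r i) * Matrix.det M := by
    rw [← Matrix.det_mul, hA, Matrix.det_mul_column]
  have hdetVx : Matrix.det (Matrix.vandermonde x) = Matrix.det (Matrix.vandermonde v) := by
    rw [Matrix.det_vandermonde, Matrix.det_vandermonde]
    refine Finset.prod_congr rfl fun i _ => Finset.prod_congr rfl fun j _ => ?_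
    rw [hx]; ring
  -- compute ∏ r
  have hprod_r : (∏ i, r i) = (∏ p ∈ offP κ, (v p.2 - v p.1 + 1)) *
      ∏ p ∈ offP κ, (v p.1 - v p.2 + 1) := by
    have h1 : ∀ i, r i = ∏ j ∈ Finset.univ.erase i, (x i - v j) := by
      intro i
      have hme : (x i - v i) * ∏ j ∈ Finset.univ.erase i, (x i - v j) = ∏ j, (x i - v j) :=
        Finset.mul_prod_erase Finset.univ (fun j => x i - v j) (Finset.mem_univ i)
      have hri : r i = ∏ j, (x i - v j) := rfl
      have h11 : x i - v i = 1 := by rw [hx]; ring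
      rw [hri, ← hme, h11, one_mul]
    rw [Finset.prod_congr rfl (fun i _ => h1 i), H1 (fun a b => x a - v b)]
    rw [mul_comm]
    congr 1
    · exact Finset.prod_congr rfl fun p _ => by rw [hx]; ring
    · exact Finset.prod_congr rfl fun p _ => by rw [hx]; ring
  have hprod_num : (∏ k, ∏ j ∈ Finset.univ.erase k, (v k - v j))
      = (∏ p ∈ offP κ, (v p.2 - v p.1)) * ∏ p ∈ offP κ, (v p.1 - v p.2) := by
    rw [H1 (fun a b => v a - v b), mul_comm]
  -- final assembly
  have hDne : (∏ p ∈ offP κ, (v p.2 - v p.1 + 1)) * (∏ p ∈ offP κ, (v p.1 - v p.2 + 1)) ≠ 0 := by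
    rw [← hprod_r]
    exact Finset.prod_ne_zero_iff.mpr fun i _ => hrne i
  rw [hdetVx, hdetCm] at hdetA
  have hdetA2 : (∏ k, ∏ j ∈ Finset.univ.erase k, (v k - v j)) = (∏ i, r i) * Matrix.det M := by
    rw [← hdetA, mul_div_assoc', mul_comm, mul_div_assoc, div_self hdetVne, mul_one]
  have hPr : (∏ i, r i) ≠ 0 := Finset.prod_ne_zero_iff.mpr fun i _ => hrne i
  rw [← hprod_num, ← hprod_r, eq_div_iff hPr, mul_comm]
  exact hdetA2.symm

/-- Symmetrization identity: the symmetrization of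
`∏_{p<q} (v_q − v_p)/(v_q − v_p + 1)` equals `det[1/(v_j + 1 − v_k)]`. -/
theorem symmetrization_det_identity (κ : ℕ) (hκ : 0 < κ) (v : Fin κ → ℂ)
    (hv : ∀ j k : Fin κ, j ≠ k → v j - v k + 1 ≠ 0) :
    (1 / (Nat.factorial κ : ℂ)) *
        ∑ σ : Equiv.Perm (Fin κ),
          ∏ p ∈ Finset.univ.filter (fun p : Fin κ × Fin κ => p.1 < p.2),
            (v (σ p.2) - v (σ p.1)) / (v (σ p.2) - v (σ p.1) + 1) =
      Matrix.det (Matrix.of fun j k : Fin κ => 1 / (v j + 1 - v k)) := by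
  show (1 / (Nat.factorial κ : ℂ)) *
        ∑ σ : Equiv.Perm (Fin κ),
          ∏ p ∈ offP κ, (v (σ p.2) - v (σ p.1)) / (v (σ p.2) - v (σ p.1) + 1) = _
  by_cases hinj : Function.Injective v
  · -- distinct case
    set Δ : ℂ := ∏ p ∈ offP κ, (v p.2 - v p.1) with hΔ
    set Δ' : ℂ := ∏ p ∈ offP κ, (v p.1 - v p.2) with hΔ'
    set Dd : ℂ := (∏ p ∈ offP κ, (v p.2 - v p.1 + 1)) * ∏ p ∈ offP κ, (v p.1 - v p.2 + 1)
      with hDd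
    have hDdne : Dd ≠ 0 := by
      rw [hDd]
      apply mul_ne_zero
      · exact Finset.prod_ne_zero_iff.mpr fun p hp =>
          hv p.2 p.1 (ne_of_gt (mem_offP.mp hp))
      · exact Finset.prod_ne_zero_iff.mpr fun p hp =>
          hv p.1 p.2 (ne_of_lt (mem_offP.mp hp))
    have hQne : ∀ σ : Equiv.Perm (Fin κ),
        (∏ p ∈ offP κ, (v (σ p.2) - v (σ p.1) + 1)) ≠ 0 := by
      intro σ
      refine Finset.prod_ne_zero_iff.mpr fun p hp => ?_
      exact hv (σ p.2) (σ p.1) (fun h => absurd (σ.injective h) (ne_of_gt (mem_offP.mp hp)))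
    have hQQ' : ∀ σ : Equiv.Perm (Fin κ),
        (∏ p ∈ offP κ, (v (σ p.2) - v (σ p.1) + 1)) *
          (∏ p ∈ offP κ, (v (σ p.1) - v (σ p.2) + 1)) = Dd := by
      intro σ
      have h := prod_symm_perm (fun a b => (v b - v a + 1) * (v a - v b + 1))
        (fun a b => by ring) σ
      simp only [Finset.prod_mul_distrib] at h
      rw [hDd]
      exact h
    have hT : ∀ σ : Equiv.Perm (Fin κ),
        (∏ p ∈ offP κ, (v (σ p.2) - v (σ p.1)) / (v (σ p.2) - v (σ p.1) + 1)) =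
          Δ / Dd * (((Equiv.Perm.sign σ : ℤ) : ℂ) *
            ∏ p ∈ offP κ, (v (σ p.1) - v (σ p.2) + 1)) := by
      intro σ
      rw [Finset.prod_div_distrib, vand_perm v σ, ← hΔ]
      rw [div_eq_iff (hQne σ)]
      have hd : Δ / Dd = Δ / Dd := rfl
      field_simp
      rw [← hQQ' σ]
      ring
    rw [Finset.sum_congr rfl (fun σ _ => hT σ), ← Finset.mul_sum, lemP v]
    rw [cauchy_det hκ v hinj hv, ← hΔ, ← hΔ', ← hDd]
    have hfac : ((Nat.factorial κ : ℂ)) ≠ 0 := Nat.cast_ne_zero.mpr (Nat.factorial_ne_zero κ)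
    field_simp
  · -- degenerate case: two equal values
    rw [Function.not_injective_iff] at hinj
    obtain ⟨j, k, hval, hjk⟩ := hinj
    have hLHS : ∀ σ : Equiv.Perm (Fin κ),
        (∏ p ∈ offP κ, (v (σ p.2) - v (σ p.1)) / (v (σ p.2) - v (σ p.1) + 1)) = 0 := by
      intro σ
      set a := σ⁻¹ j with ha
      set b := σ⁻¹ k with hb
      have hab : a ≠ b := fun h => hjk (by rw [ha, hb] at h; simpa using congrArg σ h)
      rcases lt_or_gt_of_ne hab with h | h
      · refine Finset.prod_eq_zero (mem_offP.mpr (show ((a, b) : Fin κ × Fin κ).1 < (a, b).2 from h)) ?_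
        have : v (σ b) - v (σ a) = 0 := by
          rw [ha, hb]; simp [hval]
        simp [this]
      · refine Finset.prod_eq_zero (mem_offP.mpr (show ((b, a) : Fin κ × Fin κ).1 < (b, a).2 from h)) ?_
        have : v (σ a) - v (σ b) = 0 := by
          rw [ha, hb]; simp [hval]
        simp [this]
    rw [Finset.sum_congr rfl (fun σ _ => hLHS σ), Finset.sum_const, smul_zero, mul_zero]
    symm
    apply Matrix.det_zero_of_row_eq hjk
    funext m
    show (1 : ℂ) / (v j + 1 - v m) = 1 / (v k + 1 - v m)
    rw [hval]
end
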